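/- arXiv:1705.05934 — 2 statements merged into one kernel-verified Lean document; each statement's English description precedes it below -/
import Mathlib

section
/- Assume σ = 0 and a > 0, and let k > 0 be real. Then there exist R > 0 and sequences (p_n)_{n≥0}, (b_n)_{n≥−1} of real numbers with b_{−1} = 1/a such that: (a) ∑_{n=0}^∞ p_n q^{−n} converges absolutely for every q ∈ ℂ with |q| > R and k^{−ζ_{N+1}(q)} = k^{−q/a} · ∑_{n=0}^∞ p_n q^{−n} for every real q > R; (b) ζ_{N+1}(q) = ∑_{n=−1}^∞ b_n q^{−n} for real q > R, the function q ↦ ζ_{N+1}(q) is differentiable on (R, ∞), and ζ_{N+1}′(q) = ∑_{n=0}^∞ (1−n)·b_{n−1}·q^{−n}, the latter series converging absolutely for |q| > R. Analogously, if σ = 0 and a < 0, the same statements hold with ζ̂_{N̂+1} in place of ζ_{N+1}, namely k^{ζ̂_{N̂+1}(q)} = k^{−q/a}·∑ p_n q^{−n} and −ζ̂_{N̂+1}′(q) = ∑_{n=0}^∞ (1−n)·b_{n−1}·q^{−n}. -/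
/-- The Laplace exponent of a hyperexponential Lévy process, extended to a rational
function on `ℂ`. -/
noncomputable def psi (σ A : ℝ) (N Nh : ℕ) (aa ρ ah ρh : ℕ → ℝ) (z : ℂ) : ℂ :=
  (σ : ℂ) ^ 2 * z ^ 2 / 2 + (A : ℂ) * z
    + z * ∑ ℓ ∈ Finset.Icc 1 N, (aa ℓ : ℂ) / ((ρ ℓ : ℂ) - z)
    - z * ∑ ℓ ∈ Finset.Icc 1 Nh, (ah ℓ : ℂ) / ((ρh ℓ : ℂ) + z)

set_option maxHeartbeats 1000000
set_option linter.unusedSectionVars false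
open Filter Topology
open scoped ENNReal NNReal




section Real
variable (A : ℝ) (N Nh : ℕ) (aa ρ ah ρh : ℕ → ℝ)

noncomputable def psiR (x : ℝ) : ℝ :=
  A * x + x * ∑ ℓ ∈ Finset.Icc 1 N, aa ℓ / (ρ ℓ - x)
    - x * ∑ ℓ ∈ Finset.Icc 1 Nh, ah ℓ / (ρh ℓ + x)

variable {A N Nh aa ρ ah ρh}
variable (hpos : ∀ ℓ ∈ Finset.Icc 1 N, 0 < aa ℓ)
    (hposh : ∀ ℓ ∈ Finset.Icc 1 Nh, 0 < ah ℓ)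
    (hρ0 : ρ 0 = 0) (hρh0 : ρh 0 = 0)
    (hmono : ∀ i j, i < j → j ≤ N → ρ i < ρ j)
    (hmonoh : ∀ i j, i < j → j ≤ Nh → ρh i < ρh j)

include hρ0 hmono in
lemma rhoN_nonneg : 0 ≤ ρ N := by
  rcases Nat.eq_zero_or_pos N with h | h
  · simp [h, hρ0]
  · exact le_of_lt (hρ0 ▸ hmono 0 N h le_rfl)

include hρ0 hmono in
lemma rho_le : ∀ ℓ ∈ Finset.Icc 1 N, ρ ℓ ≤ ρ N := by
  intro ℓ hℓ
  simp only [Finset.mem_Icc] at hℓ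
  rcases eq_or_lt_of_le hℓ.2 with h | h
  · exact le_of_eq (by rw [h])
  · exact le_of_lt (hmono ℓ N h le_rfl)

include hρh0 hmonoh in
lemma rhoh_pos : ∀ ℓ ∈ Finset.Icc 1 Nh, 0 < ρh ℓ := by
  intro ℓ hℓ
  simp only [Finset.mem_Icc] at hℓ
  exact hρh0 ▸ hmonoh 0 ℓ hℓ.1 hℓ.2

include hpos hposh hρ0 hρh0 hmono hmonoh in
lemma psiR_le (x : ℝ) (hx : ρ N < x) : psiR A N Nh aa ρ ah ρh x ≤ A * x := by
  have hx0 : 0 < x := lt_of_le_of_lt (rhoN_nonneg hρ0 hmono) hx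
  have h1 : x * ∑ ℓ ∈ Finset.Icc 1 N, aa ℓ / (ρ ℓ - x) ≤ 0 := by
    apply mul_nonpos_of_nonneg_of_nonpos (le_of_lt hx0)
    apply Finset.sum_nonpos
    intro ℓ hℓ
    apply div_nonpos_of_nonneg_of_nonpos (le_of_lt (hpos ℓ hℓ))
    have := rho_le hρ0 hmono ℓ hℓ
    linarith
  have h2 : 0 ≤ x * ∑ ℓ ∈ Finset.Icc 1 Nh, ah ℓ / (ρh ℓ + x) := by
    apply mul_nonneg (le_of_lt hx0)
    apply Finset.sum_nonneg
    intro ℓ hℓ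
    have h2 := rhoh_pos hρh0 hmonoh ℓ hℓ
    have h3 := hposh ℓ hℓ
    apply div_nonneg <;> linarith
  simp only [psiR]
  linarith

lemma psiR_hasDerivAt (x : ℝ) (h1 : ∀ ℓ ∈ Finset.Icc 1 N, ρ ℓ - x ≠ 0)
    (h2 : ∀ ℓ ∈ Finset.Icc 1 Nh, ρh ℓ + x ≠ 0) :
    HasDerivAt (psiR A N Nh aa ρ ah ρh)
      (A + ∑ ℓ ∈ Finset.Icc 1 N, aa ℓ * ρ ℓ / (ρ ℓ - x) ^ 2
         - ∑ ℓ ∈ Finset.Icc 1 Nh, ah ℓ * ρh ℓ / (ρh ℓ + x) ^ 2) x := by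
  have t1 : ∀ ℓ ∈ Finset.Icc 1 N, HasDerivAt (fun y => y * (aa ℓ / (ρ ℓ - y)))
      (aa ℓ * ρ ℓ / (ρ ℓ - x) ^ 2) x := by
    intro ℓ hℓ
    have hd : HasDerivAt (fun y => aa ℓ / (ρ ℓ - y))
        ((0 * (ρ ℓ - x) - aa ℓ * (0 - 1)) / (ρ ℓ - x) ^ 2) x :=
      (hasDerivAt_const x (aa ℓ)).div ((hasDerivAt_const x (ρ ℓ)).sub (hasDerivAt_id x))
        (h1 ℓ hℓ)
    have hne : ρ ℓ - x ≠ 0 := h1 ℓ hℓ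
    have := (hasDerivAt_id x).mul hd
    refine this.congr_deriv ?_
    simp only [id]
    field_simp
    ring
  have t2 : ∀ ℓ ∈ Finset.Icc 1 Nh, HasDerivAt (fun y => y * (ah ℓ / (ρh ℓ + y)))
      (ah ℓ * ρh ℓ / (ρh ℓ + x) ^ 2) x := by
    intro ℓ hℓ
    have hd : HasDerivAt (fun y => ah ℓ / (ρh ℓ + y))
        ((0 * (ρh ℓ + x) - ah ℓ * (0 + 1)) / (ρh ℓ + x) ^ 2) x :=
      (hasDerivAt_const x (ah ℓ)).div ((hasDerivAt_const x (ρh ℓ)).add (hasDerivAt_id x))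
        (h2 ℓ hℓ)
    have hne : ρh ℓ + x ≠ 0 := h2 ℓ hℓ
    have := (hasDerivAt_id x).mul hd
    refine this.congr_deriv ?_
    simp only [id]
    field_simp
    ring
  have S1 : HasDerivAt (fun y => y * ∑ ℓ ∈ Finset.Icc 1 N, aa ℓ / (ρ ℓ - y))
      (∑ ℓ ∈ Finset.Icc 1 N, aa ℓ * ρ ℓ / (ρ ℓ - x) ^ 2) x := by
    have := HasDerivAt.fun_sum t1
    simpa [Finset.mul_sum] using this
  have S2 : HasDerivAt (fun y => y * ∑ ℓ ∈ Finset.Icc 1 Nh, ah ℓ / (ρh ℓ + y))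
      (∑ ℓ ∈ Finset.Icc 1 Nh, ah ℓ * ρh ℓ / (ρh ℓ + x) ^ 2) x := by
    have := HasDerivAt.fun_sum t2
    simpa [Finset.mul_sum] using this
  have SA : HasDerivAt (fun y : ℝ => A * y) A x := by
    simpa using (hasDerivAt_id x).const_mul A
  exact (SA.add S1).sub S2

include hpos hposh hρ0 hρh0 hmono hmonoh in
lemma psiR_inj (hA : 0 < A) : ∃ X₀ : ℝ, ρ N < X₀ ∧ 0 < X₀ ∧
    Set.InjOn (psiR A N Nh aa ρ ah ρh) (Set.Ici X₀) := by
  classical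
  set C : ℝ := ∑ ℓ ∈ Finset.Icc 1 Nh, ah ℓ * ρh ℓ with hC
  have hC0 : 0 ≤ C := Finset.sum_nonneg fun ℓ hℓ =>
    mul_nonneg (le_of_lt (hposh ℓ hℓ)) (le_of_lt (rhoh_pos hρh0 hmonoh ℓ hℓ))
  set X₀ : ℝ := max (ρ N + 1) (C / A + 1) with hX₀
  have hX₀1 : 1 ≤ X₀ := by
    have h0 : (0:ℝ) ≤ C / A := div_nonneg hC0 hA.le
    have : (1:ℝ) ≤ C / A + 1 := by linarith
    exact le_trans this (le_max_right _ _)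
  have hX₀ρ : ρ N < X₀ := lt_of_lt_of_le (by linarith) (le_max_left _ _)
  have hX₀pos : 0 < X₀ := lt_of_lt_of_le one_pos hX₀1
  refine ⟨X₀, hX₀ρ, hX₀pos, ?_⟩
  have hderiv : ∀ x ∈ Set.Ici X₀, HasDerivAt (psiR A N Nh aa ρ ah ρh)
      (A + ∑ ℓ ∈ Finset.Icc 1 N, aa ℓ * ρ ℓ / (ρ ℓ - x) ^ 2
         - ∑ ℓ ∈ Finset.Icc 1 Nh, ah ℓ * ρh ℓ / (ρh ℓ + x) ^ 2) x := by
    intro x hx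
    have hx' : ρ N < x := lt_of_lt_of_le hX₀ρ hx
    apply psiR_hasDerivAt
    · intro ℓ hℓ
      have := rho_le hρ0 hmono ℓ hℓ
      intro h; linarith [sub_eq_zero.mp h]
    · intro ℓ hℓ
      have := rhoh_pos hρh0 hmonoh ℓ hℓ
      have : 0 < ρh ℓ + x := by
        have h0 : 0 < x := lt_of_lt_of_le hX₀pos hx
        linarith
      linarith
  have hpos' : ∀ x ∈ Set.Ici X₀,
      0 < A + ∑ ℓ ∈ Finset.Icc 1 N, aa ℓ * ρ ℓ / (ρ ℓ - x) ^ 2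
         - ∑ ℓ ∈ Finset.Icc 1 Nh, ah ℓ * ρh ℓ / (ρh ℓ + x) ^ 2 := by
    intro x hx
    have hx1 : 1 ≤ x := le_trans hX₀1 hx
    have hxC : C / A + 1 ≤ x := le_trans (le_max_right _ _) hx
    have hxpos : 0 < x := by linarith
    have hsum1 : 0 ≤ ∑ ℓ ∈ Finset.Icc 1 N, aa ℓ * ρ ℓ / (ρ ℓ - x) ^ 2 := by
      apply Finset.sum_nonneg
      intro ℓ hℓ
      have h1 := hpos ℓ hℓ
      have h2 : 0 ≤ ρ ℓ := by
        simp only [Finset.mem_Icc] at hℓ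
        have := hρ0 ▸ hmono 0 ℓ hℓ.1 hℓ.2
        linarith
      positivity
    have hsum2 : ∑ ℓ ∈ Finset.Icc 1 Nh, ah ℓ * ρh ℓ / (ρh ℓ + x) ^ 2 ≤ C / x ^ 2 := by
      rw [hC, Finset.sum_div]
      apply Finset.sum_le_sum
      intro ℓ hℓ
      have h1 := hposh ℓ hℓ
      have h2 := rhoh_pos hρh0 hmonoh ℓ hℓ
      apply div_le_div_of_nonneg_left (by positivity) (by positivity)
      nlinarith
    have : C / x ^ 2 < A := by
      have hx2 : x ≤ x ^ 2 := by nlinarith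
      have h3 : C / x ^ 2 ≤ C / x := div_le_div_of_nonneg_left hC0 hxpos hx2 |>.trans_eq rfl
      have h4 : C / x < A := by
        rw [div_lt_iff₀ hxpos]
        have h5 : A * (C / A + 1) ≤ A * x := mul_le_mul_of_nonneg_left hxC hA.le
        have h6 : A * (C / A + 1) = C + A := by field_simp
        nlinarith
      linarith
    linarith
  have hmono' : StrictMonoOn (psiR A N Nh aa ρ ah ρh) (Set.Ici X₀) := by
    apply strictMonoOn_of_deriv_pos (convex_Ici X₀)
    · intro x hx
      exact ((hderiv x hx).differentiableAt).continuousAt.continuousWithinAt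
    · intro x hx
      rw [interior_Ici] at hx
      rw [(hderiv x (Set.mem_Ici.mpr (le_of_lt hx))).deriv]
      exact hpos' x (Set.mem_Ici.mpr (le_of_lt hx))
  exact hmono'.injOn

end Real
noncomputable def Dfun (A : ℝ) (N Nh : ℕ) (aa ρ ah ρh : ℕ → ℝ) (t : ℂ) : ℂ :=
  (A : ℂ) + ∑ ℓ ∈ Finset.Icc 1 N, (aa ℓ : ℂ) * t / ((ρ ℓ : ℂ) * t - 1)
    - ∑ ℓ ∈ Finset.Icc 1 Nh, (ah ℓ : ℂ) * t / ((ρh ℓ : ℂ) * t + 1)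

lemma psiR_cast (A : ℝ) (N Nh : ℕ) (aa ρ ah ρh : ℕ → ℝ) (x : ℝ) :
    ((psiR A N Nh aa ρ ah ρh x : ℝ) : ℂ) = psi 0 A N Nh aa ρ ah ρh (x : ℂ) := by
  simp [psiR, psi]

lemma psi_neg (σ A : ℝ) (N Nh : ℕ) (aa ρ ah ρh : ℕ → ℝ) (z : ℂ) :
    psi σ A N Nh aa ρ ah ρh (-z) = psi σ (-A) Nh N ah ρh aa ρ z := by
  simp only [psi]
  push_cast
  have h1 : ∀ ℓ, (aa ℓ : ℂ) / ((ρ ℓ : ℂ) - -z) = (aa ℓ : ℂ) / ((ρ ℓ : ℂ) + z) := by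
    intro ℓ; rw [sub_neg_eq_add]
  have h2 : ∀ ℓ, (ah ℓ : ℂ) / ((ρh ℓ : ℂ) + -z) = (ah ℓ : ℂ) / ((ρh ℓ : ℂ) - z) := by
    intro ℓ; ring_nf
  simp only [h1, h2]
  ring

lemma psi_inv_eq (A : ℝ) (N Nh : ℕ) (aa ρ ah ρh : ℕ → ℝ) (t : ℂ) (ht : t ≠ 0)
    (h1 : ∀ ℓ ∈ Finset.Icc 1 N, (ρ ℓ : ℂ) * t - 1 ≠ 0)
    (h2 : ∀ ℓ ∈ Finset.Icc 1 Nh, (ρh ℓ : ℂ) * t + 1 ≠ 0) :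
    psi 0 A N Nh aa ρ ah ρh t⁻¹ = Dfun A N Nh aa ρ ah ρh t / t := by
  have e1 : ∀ ℓ ∈ Finset.Icc 1 N, t⁻¹ * ((aa ℓ : ℂ) / ((ρ ℓ : ℂ) - t⁻¹))
      = ((aa ℓ : ℂ) * t / ((ρ ℓ : ℂ) * t - 1)) / t := by
    intro ℓ hℓ
    have := h1 ℓ hℓ
    field_simp
  have e2 : ∀ ℓ ∈ Finset.Icc 1 Nh, t⁻¹ * ((ah ℓ : ℂ) / ((ρh ℓ : ℂ) + t⁻¹))
      = ((ah ℓ : ℂ) * t / ((ρh ℓ : ℂ) * t + 1)) / t := by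
    intro ℓ hℓ
    have := h2 ℓ hℓ
    field_simp
  simp only [psi, Dfun]
  rw [Finset.mul_sum, Finset.mul_sum, Finset.sum_congr rfl e1, Finset.sum_congr rfl e2,
    ← Finset.sum_div, ← Finset.sum_div]
  field_simp
  push_cast
  ring

open Filter Topology
open scoped ENNReal NNReal

lemma Dfun_zero (A : ℝ) (N Nh : ℕ) (aa ρ ah ρh : ℕ → ℝ) :
    Dfun A N Nh aa ρ ah ρh 0 = (A : ℂ) := by
  simp [Dfun]

lemma Dfun_analyticAt (A : ℝ) (N Nh : ℕ) (aa ρ ah ρh : ℕ → ℝ) :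
    AnalyticAt ℂ (Dfun A N Nh aa ρ ah ρh) 0 := by
  apply AnalyticAt.sub
  · apply AnalyticAt.add
    · exact analyticAt_const
    · apply Finset.analyticAt_fun_sum
      intro ℓ _
      exact (analyticAt_const.mul analyticAt_id).div
        ((analyticAt_const.mul analyticAt_id).sub analyticAt_const) (by simp)
  · apply Finset.analyticAt_fun_sum
    intro ℓ _
    exact (analyticAt_const.mul analyticAt_id).div
      ((analyticAt_const.mul analyticAt_id).add analyticAt_const) (by simp)

lemma Dfun_conj (A : ℝ) (N Nh : ℕ) (aa ρ ah ρh : ℕ → ℝ) (t : ℂ) :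
    Dfun A N Nh aa ρ ah ρh ((starRingEnd ℂ) t) = (starRingEnd ℂ) (Dfun A N Nh aa ρ ah ρh t) := by
  simp only [Dfun, map_add, map_sub, map_sum, map_div₀, map_mul, map_one,
    Complex.conj_ofReal]

lemma exists_Psi (A : ℝ) (hA : A ≠ 0) (N Nh : ℕ) (aa ρ ah ρh : ℕ → ℝ) :
    ∃ Ψ : ℂ → ℂ, AnalyticAt ℂ Ψ 0 ∧ Ψ 0 = 0 ∧ deriv Ψ 0 = (A : ℂ) ∧
      (∀ᶠ w in 𝓝 (0 : ℂ), Ψ w / Dfun A N Nh aa ρ ah ρh (Ψ w) = w) ∧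
      (∀ᶠ x : ℝ in 𝓝 0, (Ψ (x : ℂ)).im = 0) := by
  classical
  set D := Dfun A N Nh aa ρ ah ρh with hD
  set Φ : ℂ → ℂ := fun t => t / D t with hΦ
  have hAC : (A : ℂ) ≠ 0 := by exact_mod_cast Complex.ofReal_ne_zero.mpr hA
  have hD0 : D 0 = (A : ℂ) := Dfun_zero A N Nh aa ρ ah ρh
  have hDan : AnalyticAt ℂ D 0 := Dfun_analyticAt A N Nh aa ρ ah ρh
  have hD0ne : D 0 ≠ 0 := by rw [hD0]; exact hAC
  have hΦan : AnalyticAt ℂ Φ 0 := analyticAt_id.div hDan hD0ne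
  have hΦ0 : Φ 0 = 0 := by simp [hΦ]
  have hΦd : HasDerivAt Φ ((A : ℂ)⁻¹) 0 := by
    have h := (hasDerivAt_id (0:ℂ)).div (hDan.differentiableAt.hasDerivAt) hD0ne
    refine HasDerivAt.congr_deriv (f := Φ) h ?_
    rw [hD0]
    simp
    field_simp
  have hΦs : HasStrictDerivAt Φ ((A : ℂ)⁻¹) 0 := by
    have h := (hΦan.contDiffAt (n := 1)).hasStrictDerivAt one_ne_zero
    rwa [hΦd.deriv] at h
  have hinv : ((A : ℂ)⁻¹) ≠ 0 := inv_ne_zero hAC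
  set Ψ : ℂ → ℂ := hΦs.localInverse Φ _ 0 hinv with hΨdef
  have hF := hΦs.hasStrictFDerivAt_equiv hinv
  have hΨs : HasStrictDerivAt Ψ (A : ℂ) 0 := by
    have h := hΦs.to_localInverse hinv
    rw [hΦ0, inv_inv] at h
    exact h
  have hΨ0 : Ψ 0 = 0 := by
    have h := hF.localInverse_apply_image
    rwa [hΦ0] at h
  have hleft : ∀ᶠ t in 𝓝 (0:ℂ), Ψ (Φ t) = t := hF.eventually_left_inverse
  have hright : ∀ᶠ w in 𝓝 (0:ℂ), Φ (Ψ w) = w := by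
    have h := hF.eventually_right_inverse
    rwa [hΦ0] at h
  -- analyticity of Ψ at 0
  have hderiv_eq : deriv Φ = fun z => fderiv ℂ Φ z 1 := by
    funext z
    rw [fderiv_apply_one_eq_deriv]
  have hdca : ContinuousAt (deriv Φ) 0 := by
    rw [hderiv_eq]
    exact ((ContinuousLinearMap.apply ℂ ℂ (1:ℂ)).continuous.continuousAt).comp
      (hΦan.fderiv.continuousAt)
  have hdne : ∀ᶠ t in 𝓝 (0:ℂ), deriv Φ t ≠ 0 := by
    apply hdca.eventually_ne
    rw [hΦd.deriv]
    exact hinv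
  have hUev : ∀ᶠ t in 𝓝 (0:ℂ), AnalyticAt ℂ Φ t ∧ deriv Φ t ≠ 0 ∧ Ψ (Φ t) = t :=
    (hΦan.eventually_analyticAt.and (hdne.and hleft))
  obtain ⟨O, hOsub, hOopen, hO0⟩ := eventually_nhds_iff.mp hUev
  have hΨtendsto : Tendsto Ψ (𝓝 0) (𝓝 0) := by
    have := hΨs.hasDerivAt.continuousAt.tendsto
    rwa [hΨ0] at this
  have hΨdiff : ∀ᶠ w in 𝓝 (0:ℂ), DifferentiableAt ℂ Ψ w := by
    have hmemO : ∀ᶠ w in 𝓝 (0:ℂ), Ψ w ∈ O :=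
      hΨtendsto.eventually (hOopen.eventually_mem hO0)
    filter_upwards [hmemO, hright] with w hmem hrw
    set t := Ψ w with ht
    obtain ⟨hant, hdnet, _⟩ := hOsub t hmem
    have hΦst : HasStrictDerivAt Φ (deriv Φ t) t :=
      (hant.contDiffAt (n := 1)).hasStrictDerivAt one_ne_zero
    have hFt := hΦst.hasStrictFDerivAt_equiv hdnet
    have hg : ∀ᶠ s in 𝓝 t, Ψ (Φ s) = s := by
      filter_upwards [hOopen.mem_nhds hmem] with s hs
      exact (hOsub s hs).2.2
    have huniq := hFt.localInverse_unique hg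
    have hloc := hΦst.to_localInverse (hf' := hdnet)
    have heq : Ψ =ᶠ[𝓝 (Φ t)] (hΦst.localInverse Φ _ t hdnet) := huniq
    have : HasDerivAt Ψ ((deriv Φ t)⁻¹) (Φ t) :=
      hloc.hasDerivAt.congr_of_eventuallyEq heq
    rw [hrw] at this
    exact this.differentiableAt
  have hΨan : AnalyticAt ℂ Ψ 0 := Complex.analyticAt_iff_eventually_differentiableAt.mpr hΨdiff
  -- realness
  have hΦconj : ∀ t, Φ ((starRingEnd ℂ) t) = (starRingEnd ℂ) (Φ t) := by
    intro t
    show (starRingEnd ℂ) t / D ((starRingEnd ℂ) t) = (starRingEnd ℂ) (t / D t)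
    rw [hD, Dfun_conj, map_div₀]
  have hconj0 : Tendsto (fun t : ℂ => (starRingEnd ℂ) t) (𝓝 0) (𝓝 0) := by
    have := Complex.continuous_conj.tendsto (0:ℂ)
    rwa [map_zero] at this
  have hgconj : ∀ᶠ t in 𝓝 (0:ℂ), (starRingEnd ℂ) (Ψ ((starRingEnd ℂ) (Φ t))) = t := by
    filter_upwards [hconj0.eventually hleft] with t h
    rw [← hΦconj, h, Complex.conj_conj]
  have huniq2 := hF.localInverse_unique (g := fun w => (starRingEnd ℂ) (Ψ ((starRingEnd ℂ) w)))
    hgconj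
  rw [hΦ0] at huniq2
  have hreal : ∀ᶠ x : ℝ in 𝓝 0, (Ψ (x : ℂ)).im = 0 := by
    have hofR : Tendsto (fun x : ℝ => (x : ℂ)) (𝓝 0) (𝓝 0) := by
      have := Complex.continuous_ofReal.tendsto (0:ℝ)
      rwa [Complex.ofReal_zero] at this
    have h2 : ∀ᶠ x : ℝ in 𝓝 0, (starRingEnd ℂ) (Ψ ((starRingEnd ℂ) (x:ℂ))) = Ψ (x:ℂ) :=
      hofR.eventually huniq2
    filter_upwards [h2] with x h
    rw [Complex.conj_ofReal] at h
    have : (starRingEnd ℂ) (Ψ (x:ℂ)) = Ψ (x:ℂ) := h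
    rw [Complex.conj_eq_iff_im] at this
    exact this
  refine ⟨Ψ, hΨan, hΨ0, hΨs.hasDerivAt.deriv, ?_, hreal⟩
  exact hright



lemma core_lemma (A : ℝ) (N Nh : ℕ) (aa ρ ah ρh : ℕ → ℝ)
    (hpos : ∀ ℓ ∈ Finset.Icc 1 N, 0 < aa ℓ)
    (hposh : ∀ ℓ ∈ Finset.Icc 1 Nh, 0 < ah ℓ)
    (hρ0 : ρ 0 = 0) (hρh0 : ρh 0 = 0)
    (hmono : ∀ i j, i < j → j ≤ N → ρ i < ρ j)
    (hmonoh : ∀ i j, i < j → j ≤ Nh → ρh i < ρh j)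
    (hA : 0 < A) (k : ℝ) (hk : 0 < k) (X : ℝ → ℝ)
    (hX : ∀ q : ℝ, 0 < q → ρ N < X q ∧ psi 0 A N Nh aa ρ ah ρh (X q : ℂ) = (q : ℂ)) :
    ∃ R > (0 : ℝ), ∃ p b : ℕ → ℝ, b 0 = 1 / A ∧
      (∀ q : ℂ, R < ‖q‖ → Summable (fun n : ℕ => ‖(p n : ℂ) * q ^ (-(n : ℤ))‖)) ∧
      (∀ q : ℝ, R < q →
        k ^ (-(X q)) = k ^ (-(q / A)) * ∑' n : ℕ, p n * q ^ (-(n : ℤ))) ∧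
      (∀ q : ℝ, R < q →
        X q = ∑' n : ℕ, b n * q ^ (1 - (n : ℤ)) ∧
        HasDerivAt X (∑' n : ℕ, (1 - (n : ℝ)) * b n * q ^ (-(n : ℤ))) q) ∧
      (∀ q : ℂ, R < ‖q‖ →
        Summable (fun n : ℕ => ‖(((1 - (n : ℝ)) * b n : ℝ) : ℂ) * q ^ (-(n : ℤ))‖)) := by
  classical
  have hAne : A ≠ 0 := ne_of_gt hA
  have hAC : (A : ℂ) ≠ 0 := Complex.ofReal_ne_zero.mpr hAne
  obtain ⟨Ψ, hΨan, hΨ0, hΨd, hright, hreal⟩ := exists_Psi A hAne N Nh aa ρ ah ρh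
  -- E, L, G, P
  set E : ℂ → ℂ := dslope Ψ 0 with hEdef
  have hEan : AnalyticAt ℂ E 0 := by
    obtain ⟨pψ, hpψ⟩ := hΨan
    obtain ⟨rψ, hrψ⟩ := hpψ
    exact (hrψ.hasFPowerSeriesAt.has_fpower_series_dslope_fslope).analyticAt
  have hE0 : E 0 = (A : ℂ) := by rw [hEdef, dslope_same, hΨd]
  have hE0ne : E 0 ≠ 0 := by rw [hE0]; exact hAC
  have hfact : ∀ w : ℂ, Ψ w = w * E w := by
    intro w
    have h := sub_smul_dslope Ψ 0 w
    simp only [sub_zero, smul_eq_mul, hΨ0] at h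
    rw [← hEdef] at h
    exact h.symm
  set L : ℂ → ℂ := fun w => (E w)⁻¹ with hLdef
  have hLan : AnalyticAt ℂ L 0 := hEan.inv hE0ne
  have hL0 : L 0 = (A : ℂ)⁻¹ := by rw [hLdef]; simp [hE0]
  set G : ℂ → ℂ := dslope L 0 with hGdef
  have hGan : AnalyticAt ℂ G 0 := by
    obtain ⟨pl, hpl⟩ := hLan
    obtain ⟨rl, hrl⟩ := hpl
    exact (hrl.hasFPowerSeriesAt.has_fpower_series_dslope_fslope).analyticAt
  have hLfact : ∀ w : ℂ, L w = (A : ℂ)⁻¹ + w * G w := by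
    intro w
    have h := sub_smul_dslope L 0 w
    simp only [sub_zero, smul_eq_mul, hL0] at h
    rw [← hGdef] at h
    linear_combination -h
  set c : ℝ := -(Real.log k) with hcdef
  set P : ℂ → ℂ := fun w => Complex.exp ((c : ℂ) * G w) with hPdef
  have hPan : AnalyticAt ℂ P 0 := (analyticAt_const.mul hGan).cexp
  -- power series
  obtain ⟨pL, hpLat⟩ := hLan
  obtain ⟨rL, hpL⟩ := hpLat
  obtain ⟨pP, hpPat⟩ := hPan
  obtain ⟨rP, hpP⟩ := hpPat
  obtain ⟨s, hs0, hslt⟩ := ENNReal.lt_iff_exists_nnreal_btwn.mp (lt_min hpL.r_pos hpP.r_pos)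
  have hsL : (s : ℝ≥0∞) < pL.radius := lt_of_lt_of_le (hslt.trans_le (min_le_left _ _)) hpL.r_le
  have hsP : (s : ℝ≥0∞) < pP.radius := lt_of_lt_of_le (hslt.trans_le (min_le_right _ _)) hpP.r_le
  have hspos : (0 : ℝ) < s := by exact_mod_cast hs0
  have hsumL : Summable (fun n => ‖pL n‖ * (s : ℝ) ^ n) := pL.summable_norm_mul_pow hsL
  have hsumP : Summable (fun n => ‖pP n‖ * (s : ℝ) ^ n) := pP.summable_norm_mul_pow hsP
  obtain ⟨CL, hCL0, hCL⟩ := pL.norm_mul_pow_le_of_lt_radius hsL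
  -- coefficients
  set b : ℕ → ℝ := fun n => (pL.coeff n).re with hbdef
  set p : ℕ → ℝ := fun n => (pP.coeff n).re with hpdef
  have hb0 : b 0 = 1 / A := by
    have h := hpL.hasFPowerSeriesAt.coeff_zero 1
    have hco : pL.coeff 0 = L 0 := h
    rw [hbdef]
    simp only [hco, hL0, ← Complex.ofReal_inv, Complex.ofReal_re, one_div]
  -- eventual neighborhood conditions
  have hΨt : Tendsto Ψ (𝓝 0) (𝓝 0) := by
    have := hΨan.continuousAt.tendsto
    rwa [hΨ0] at this
  have hDcont : ContinuousAt (Dfun A N Nh aa ρ ah ρh) 0 :=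
    (Dfun_analyticAt A N Nh aa ρ ah ρh).continuousAt
  have hDne : ∀ᶠ w in 𝓝 (0 : ℂ), Dfun A N Nh aa ρ ah ρh (Ψ w) ≠ 0 := by
    have h0 : ∀ᶠ t in 𝓝 (0 : ℂ), Dfun A N Nh aa ρ ah ρh t ≠ 0 := by
      apply hDcont.eventually_ne
      rw [Dfun_zero]; exact hAC
    exact hΨt.eventually h0
  have hdenom : ∀ᶠ t in 𝓝 (0 : ℂ),
      (∀ ℓ ∈ Finset.Icc 1 N, (ρ ℓ : ℂ) * t - 1 ≠ 0) ∧
      (∀ ℓ ∈ Finset.Icc 1 Nh, (ρh ℓ : ℂ) * t + 1 ≠ 0) := by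
    apply Filter.Eventually.and
    · rw [Finset.eventually_all]
      intro ℓ _
      have hc : ContinuousAt (fun t : ℂ => (ρ ℓ : ℂ) * t - 1) 0 :=
        ((continuous_const.mul continuous_id).sub continuous_const).continuousAt
      apply hc.eventually_ne
      simp
    · rw [Finset.eventually_all]
      intro ℓ _
      have hc : ContinuousAt (fun t : ℂ => (ρh ℓ : ℂ) * t + 1) 0 :=
        ((continuous_const.mul continuous_id).add continuous_const).continuousAt
      apply hc.eventually_ne
      simp
  have hdenomΨ : ∀ᶠ w in 𝓝 (0 : ℂ),
      (∀ ℓ ∈ Finset.Icc 1 N, (ρ ℓ : ℂ) * Ψ w - 1 ≠ 0) ∧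
      (∀ ℓ ∈ Finset.Icc 1 Nh, (ρh ℓ : ℂ) * Ψ w + 1 ≠ 0) := hΨt.eventually hdenom
  have hEnear : ∀ᶠ w in 𝓝 (0 : ℂ), ‖E w - (A : ℂ)‖ < A / 2 := by
    have hEt : Tendsto E (𝓝 0) (𝓝 (A : ℂ)) := by
      have := hEan.continuousAt.tendsto
      rwa [hE0] at this
    have h1 : ∀ᶠ z in 𝓝 ((A:ℝ) : ℂ), ‖z - (A : ℂ)‖ < A / 2 := by
      have hball := Metric.ball_mem_nhds ((A:ℝ) : ℂ) (show (0:ℝ) < A / 2 by linarith)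
      filter_upwards [hball] with z hz
      rw [Metric.mem_ball, dist_eq_norm] at hz
      exact hz
    exact hEt.eventually h1
  have hall : ∀ᶠ w in 𝓝 (0 : ℂ),
      (Ψ w / Dfun A N Nh aa ρ ah ρh (Ψ w) = w) ∧
      Dfun A N Nh aa ρ ah ρh (Ψ w) ≠ 0 ∧
      ((∀ ℓ ∈ Finset.Icc 1 N, (ρ ℓ : ℂ) * Ψ w - 1 ≠ 0) ∧
       (∀ ℓ ∈ Finset.Icc 1 Nh, (ρh ℓ : ℂ) * Ψ w + 1 ≠ 0)) ∧
      ‖E w - (A : ℂ)‖ < A / 2 :=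
    hright.and (hDne.and (hdenomΨ.and hEnear))
  obtain ⟨ε₁, hε₁pos, hε₁⟩ := Metric.eventually_nhds_iff_ball.mp hall
  obtain ⟨ε₂, hε₂pos, hε₂⟩ := Metric.eventually_nhds_iff_ball.mp hreal
  -- injectivity data
  obtain ⟨X₀, hX₀ρ, hX₀pos, hinj⟩ := psiR_inj hpos hposh hρ0 hρh0 hmono hmonoh hA
  -- THE radius
  set R : ℝ := max (max (1 / ε₁) (1 / ε₂))
      (max (2 / s) (max (A * X₀ + 3 * A / 2 * X₀ + 1) 1)) with hRdef
  have hR1 : (1 : ℝ) ≤ R := le_max_of_le_right (le_max_of_le_right (le_max_right _ _))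
  have hRpos : (0 : ℝ) < R := lt_of_lt_of_le one_pos hR1
  have hRε₁ : 1 / ε₁ ≤ R := le_max_of_le_left (le_max_left _ _)
  have hRε₂ : 1 / ε₂ ≤ R := le_max_of_le_left (le_max_right _ _)
  have hRs : 2 / s ≤ R := le_max_of_le_right (le_max_left _ _)
  have hRX₀ : A * X₀ + 3 * A / 2 * X₀ + 1 ≤ R :=
    le_max_of_le_right (le_max_of_le_right (le_max_left _ _))
  -- generic HasSum extraction
  have hhs : ∀ (F : ℂ → ℂ) (pF : FormalMultilinearSeries ℂ ℂ ℂ) (rF : ℝ≥0∞),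
      HasFPowerSeriesOnBall F pF 0 rF → (s : ℝ≥0∞) ≤ rF → ∀ w : ℂ, ‖w‖ < (s : ℝ) →
      HasSum (fun n => pF.coeff n * w ^ n) (F w) := by
    intro F pF rF hF hsr w hw
    have hmem : w ∈ Metric.eball (0 : ℂ) rF := by
      rw [Metric.mem_eball, edist_zero_right]
      refine lt_of_lt_of_le ?_ hsr
      exact_mod_cast hw
    have h2 := hF.hasSum hmem
    simp only [zero_add, FormalMultilinearSeries.apply_eq_pow_smul_coeff, smul_eq_mul] at h2
    have hfe : (fun n : ℕ => pF.coeff n * w ^ n) = fun n => w ^ n * pF.coeff n := by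
      funext n; ring
    rw [hfe]
    exact h2
  have hrLge : (s : ℝ≥0∞) ≤ rL := le_of_lt (hslt.trans_le (min_le_left _ _))
  have hrPge : (s : ℝ≥0∞) ≤ rP := le_of_lt (hslt.trans_le (min_le_right _ _))
  -- main root identification
  have hmain : ∀ q : ℝ, R < q → (X q : ℂ) = (q : ℂ) * L ((q : ℂ)⁻¹) ∧
      G ((q : ℂ)⁻¹) = ((X q - q / A : ℝ) : ℂ) := by
    intro q hq
    have hq0 : 0 < q := lt_trans hRpos hq
    have hqC : (q : ℂ) ≠ 0 := by exact_mod_cast ne_of_gt hq0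
    set w : ℂ := ((q : ℂ))⁻¹ with hwdef
    have hwne : w ≠ 0 := inv_ne_zero hqC
    have hIw : (q : ℂ) * w = 1 := mul_inv_cancel₀ hqC
    have hwreal : w = ((q⁻¹ : ℝ) : ℂ) := by rw [hwdef, Complex.ofReal_inv]
    have hwnorm : ‖w‖ = q⁻¹ := by
      rw [hwreal, Complex.norm_real, Real.norm_eq_abs, abs_of_pos (by positivity)]
    have hqinv1 : q⁻¹ < ε₁ := by
      rw [inv_lt_comm₀ hq0 hε₁pos, inv_eq_one_div]
      exact lt_of_le_of_lt hRε₁ hq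
    have hqinv2 : q⁻¹ < ε₂ := by
      rw [inv_lt_comm₀ hq0 hε₂pos, inv_eq_one_div]
      exact lt_of_le_of_lt hRε₂ hq
    have hball1 : w ∈ Metric.ball (0 : ℂ) ε₁ := by
      rw [Metric.mem_ball, dist_zero_right, hwnorm]
      exact hqinv1
    obtain ⟨hΦw, hDw, ⟨hden1, hden2⟩, hEnw⟩ := hε₁ w hball1
    have him : (Ψ w).im = 0 := by
      rw [hwreal]
      refine hε₂ q⁻¹ ?_
      rw [Metric.mem_ball, dist_zero_right, Real.norm_eq_abs, abs_of_pos (by positivity)]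
      exact hqinv2
    set tr : ℝ := (Ψ w).re with htrdef
    have hΨw : Ψ w = ((tr : ℝ) : ℂ) := by
      apply Complex.ext
      · simp [htrdef]
      · simp [him]
    have hEw : E w = ((q * tr : ℝ) : ℂ) := by
      have h := hfact w
      rw [hΨw] at h
      have : E w = (q : ℂ) * (w * E w) := by
        rw [← mul_assoc, hIw, one_mul]
      rw [this, ← h]
      push_cast
      ring
    have habs : |q * tr - A| < A / 2 := by
      have : E w - ((A : ℝ) : ℂ) = ((q * tr - A : ℝ) : ℂ) := by
        rw [hEw]; push_cast; ring
      rwa [this, Complex.norm_real, Real.norm_eq_abs] at hEnw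
    rw [abs_lt] at habs
    have hqtr1 : A / 2 < q * tr := by linarith
    have hqtr2 : q * tr < 3 * A / 2 := by linarith
    have htr0 : 0 < tr := by nlinarith
    have htrC : ((tr : ℝ) : ℂ) ≠ 0 := by exact_mod_cast ne_of_gt htr0
    have hq3 : 3 * A / 2 * X₀ < q := by
      have h0 : 0 ≤ A * X₀ := by positivity
      have := lt_of_le_of_lt hRX₀ hq
      linarith
    have hqAX : A * X₀ < q := by
      have h0 : 0 ≤ 3 * A / 2 * X₀ := by positivity
      have := lt_of_le_of_lt hRX₀ hq
      linarith
    have hxX₀ : X₀ < tr⁻¹ := by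
      have h1 : X₀ * tr < 1 := by
        nlinarith [mul_lt_mul_of_pos_right hq3 htr0]
      rw [show tr⁻¹ = 1 / tr from (one_div tr).symm, lt_div_iff₀ htr0]
      exact h1
    -- root equation for x := tr⁻¹
    have ht0 : Ψ w ≠ 0 := by rw [hΨw]; exact htrC
    have hteq : Ψ w = w * Dfun A N Nh aa ρ ah ρh (Ψ w) := by
      rw [div_eq_iff hDw] at hΦw
      linear_combination hΦw
    have hpsit : psi 0 A N Nh aa ρ ah ρh (Ψ w)⁻¹ = (q : ℂ) := by
      rw [psi_inv_eq A N Nh aa ρ ah ρh (Ψ w) ht0 hden1 hden2]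
      rw [hteq]
      have hDw' : Dfun A N Nh aa ρ ah ρh (Ψ w) = Dfun A N Nh aa ρ ah ρh (w * Dfun A N Nh aa ρ ah ρh (Ψ w)) := by
        rw [← hteq]
      rw [← hDw']
      field_simp
      rw [hwdef]
      field_simp
    have hxroot : psiR A N Nh aa ρ ah ρh tr⁻¹ = q := by
      have hcast := psiR_cast A N Nh aa ρ ah ρh tr⁻¹
      have : psi 0 A N Nh aa ρ ah ρh ((tr⁻¹ : ℝ) : ℂ) = (q : ℂ) := by
        rw [Complex.ofReal_inv, ← hΨw]
        exact hpsit
      rw [this] at hcast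
      exact_mod_cast hcast
    obtain ⟨hXρ, hXψ⟩ := hX q hq0
    have hXroot : psiR A N Nh aa ρ ah ρh (X q) = q := by
      have hcast := psiR_cast A N Nh aa ρ ah ρh (X q)
      rw [hXψ] at hcast
      exact_mod_cast hcast
    have hXX₀ : X₀ < X q := by
      have hle := psiR_le (A := A) hpos hposh hρ0 hρh0 hmono hmonoh (X q) hXρ
      rw [hXroot] at hle
      nlinarith
    have hXeq : X q = tr⁻¹ := by
      apply hinj (Set.mem_Ici.mpr (le_of_lt hXX₀)) (Set.mem_Ici.mpr (le_of_lt hxX₀))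
      rw [hXroot, hxroot]
    have hEwne : E w ≠ 0 := by
      rw [hEw]
      have : (0:ℝ) < q * tr := by positivity
      exact_mod_cast ne_of_gt this
    have hXC : (X q : ℂ) = (q : ℂ) * L w := by
      rw [hXeq, Complex.ofReal_inv, ← hΨw]
      rw [hfact w, mul_inv]
      rw [hwdef, inv_inv]
    refine ⟨hXC, ?_⟩
    have hLw := hLfact w
    have h5 : (q : ℂ) * L w = (q : ℂ) * (A : ℂ)⁻¹ + G w := by
      rw [hLw]
      linear_combination G w * hIw
    have h6 : G w = (X q : ℂ) - (q : ℂ) * (A : ℂ)⁻¹ := by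
      rw [hXC, h5]; ring
    rw [h6]
    push_cast
    ring
  -- the two real HasSum statements
  have hBS : ∀ q : ℝ, R < q → HasSum (fun n => b n * q ^ (1 - (n : ℤ))) (X q) := by
    intro q hq
    have hq0 : 0 < q := lt_trans hRpos hq
    have hqC : (q : ℂ) ≠ 0 := by exact_mod_cast ne_of_gt hq0
    have hwnorm : ‖((q : ℂ))⁻¹‖ < (s : ℝ) := by
      rw [norm_inv, Complex.norm_real, Real.norm_eq_abs, abs_of_pos hq0]
      rw [inv_lt_comm₀ hq0 hspos]
      have h4 : (s:ℝ)⁻¹ ≤ 2 / s := by rw [inv_eq_one_div]; gcongr; norm_num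
      have h3 : 2 / (s:ℝ) < q := lt_of_le_of_lt hRs hq
      linarith
    have hL := hhs L pL rL hpL hrLge ((q : ℂ))⁻¹ hwnorm
    have h3 := hL.mul_left (q : ℂ)
    have hterm : ∀ n : ℕ, (q : ℂ) * (pL.coeff n * ((q : ℂ)⁻¹) ^ n)
        = pL.coeff n * (q : ℂ) ^ (1 - (n : ℤ)) := by
      intro n
      rw [zpow_sub₀ hqC, zpow_one, zpow_natCast, inv_pow]
      ring
    have h4 : HasSum (fun n => pL.coeff n * (q : ℂ) ^ (1 - (n : ℤ))) ((X q : ℝ) : ℂ) := by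
      rw [(hmain q hq).1]
      rw [← funext hterm]
      exact h3
    have h5 := Complex.hasSum_re h4
    have h6 : (fun n : ℕ => (pL.coeff n * (q : ℂ) ^ (1 - (n : ℤ))).re)
        = fun n => b n * q ^ (1 - (n : ℤ)) := by
      funext n
      have hzz : ((q : ℂ)) ^ (1 - (n:ℤ)) = ((q ^ (1 - (n:ℤ)) : ℝ) : ℂ) :=
        (Complex.ofReal_zpow q _).symm
      rw [hzz, Complex.mul_re, Complex.ofReal_re, Complex.ofReal_im]
      simp [hbdef]
    rw [Complex.ofReal_re, h6] at h5
    exact h5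
  refine ⟨R, hRpos, p, b, hb0, ?_, ?_, ?_, ?_⟩
  · -- summability of p-series
    intro q hq
    have hbound : ∀ n : ℕ, ‖(p n : ℂ) * q ^ (-(n : ℤ))‖ ≤ ‖pP n‖ * (s : ℝ) ^ n := by
      intro n
      have hq0 : 0 < ‖q‖ := lt_trans hRpos hq
      have hqC : q ≠ 0 := by intro h; rw [h] at hq0; simp at hq0
      rw [norm_mul, norm_zpow]
      have h1 : ‖(p n : ℂ)‖ ≤ ‖pP n‖ := by
        rw [Complex.norm_real, Real.norm_eq_abs]
        calc |p n| ≤ ‖pP.coeff n‖ := Complex.abs_re_le_norm _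
        _ = ‖pP.coeff n‖ := rfl
        _ = ‖pP n‖ := FormalMultilinearSeries.norm_apply_eq_norm_coef.symm
      have h2 : ‖q‖ ^ (-(n:ℤ)) ≤ (s : ℝ) ^ n := by
        rw [zpow_neg, zpow_natCast, ← inv_pow]
        apply pow_le_pow_left₀ (by positivity)
        rw [inv_le_comm₀ hq0 hspos]
        have h4 : (s:ℝ)⁻¹ ≤ 2 / s := by rw [inv_eq_one_div]; gcongr; norm_num
        have h3 : 2 / (s:ℝ) < ‖q‖ := lt_of_le_of_lt hRs hq
        linarith
      exact mul_le_mul h1 h2 (by positivity) (norm_nonneg _)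
    exact Summable.of_nonneg_of_le (fun n => norm_nonneg _) hbound hsumP
  · -- part (a) identity
    intro q hq
    have hq0 : 0 < q := lt_trans hRpos hq
    have hqC : (q : ℂ) ≠ 0 := by exact_mod_cast ne_of_gt hq0
    have hwnorm : ‖((q : ℂ))⁻¹‖ < (s : ℝ) := by
      rw [norm_inv, Complex.norm_real, Real.norm_eq_abs, abs_of_pos hq0]
      rw [inv_lt_comm₀ hq0 hspos]
      have h4 : (s:ℝ)⁻¹ ≤ 2 / s := by rw [inv_eq_one_div]; gcongr; norm_num
      have h3 : 2 / (s:ℝ) < q := lt_of_le_of_lt hRs hq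
      linarith
    have hPw := hhs P pP rP hpP hrPge ((q : ℂ))⁻¹ hwnorm
    set gr : ℝ := X q - q / A with hgrdef
    have hGw : G ((q : ℂ))⁻¹ = ((gr : ℝ) : ℂ) := (hmain q hq).2
    have hPval : P ((q : ℂ))⁻¹ = ((Real.exp (c * gr) : ℝ) : ℂ) := by
      rw [hPdef]
      simp only []
      rw [hGw, ← Complex.ofReal_mul, Complex.ofReal_exp]
    have h5 := Complex.hasSum_re hPw
    rw [hPval, Complex.ofReal_re] at h5
    have h6 : (fun n : ℕ => (pP.coeff n * ((q : ℂ)⁻¹) ^ n).re)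
        = fun n => p n * q ^ (-(n:ℤ)) := by
      funext n
      have hz : ((q : ℂ)⁻¹) ^ n = (((q : ℝ) ^ (-(n:ℤ)) : ℝ) : ℂ) := by
        rw [Complex.ofReal_zpow]
        push_cast
        rw [zpow_neg, zpow_natCast, inv_pow]
      rw [hz, Complex.mul_re, Complex.ofReal_re, Complex.ofReal_im]
      simp [hpdef]
    rw [h6] at h5
    have h7 : HasSum (fun n => p n * q ^ (-(n:ℤ))) (Real.exp (c * gr)) := h5
    have hXgr : -(X q) = -(q / A) + -gr := by rw [hgrdef]; ring
    rw [hXgr, Real.rpow_add hk, Real.rpow_def_of_pos hk (-gr), h7.tsum_eq]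
    congr 2
    rw [hcdef]
    ring
  · -- part (b)
    intro q hq
    have hq0 : 0 < q := lt_trans hRpos hq
    refine ⟨(hBS q hq).tsum_eq.symm, ?_⟩
    -- derivative via uniform convergence
    set u : ℕ → ℝ := fun n => CL * (((n : ℝ) + 1) * (1/2 : ℝ) ^ n) with hudef
    have hu : Summable u := by
      apply Summable.mul_left
      have h1 : Summable (fun n : ℕ => (n : ℝ) ^ 1 * (1/2 : ℝ) ^ n) :=
        summable_pow_mul_geometric_of_norm_lt_one 1 (by rw [Real.norm_eq_abs, abs_of_pos (by norm_num : (0:ℝ) < 1/2)]; norm_num)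
      have h2 : Summable (fun n : ℕ => (1/2 : ℝ) ^ n) :=
        summable_geometric_of_lt_one (by norm_num) (by norm_num)
      exact ((h1.add h2).congr (fun n => by ring))
    have hbound : ∀ (n : ℕ) (y : ℝ), y ∈ Set.Ioi R →
        ‖(1 - (n : ℝ)) * b n * y ^ (-(n:ℤ))‖ ≤ u n := by
      intro n y hy
      have hy0 : 0 < y := lt_trans hRpos hy
      have h1 : |1 - (n : ℝ)| ≤ (n : ℝ) + 1 := by
        rw [abs_le]
        constructor <;> [linarith [Nat.cast_nonneg (α := ℝ) n]; linarith [Nat.cast_nonneg (α := ℝ) n]]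
      have h2 : |b n| ≤ ‖pL n‖ := by
        calc |b n| ≤ ‖pL.coeff n‖ := Complex.abs_re_le_norm _
        _ = ‖pL.coeff n‖ := rfl
        _ = ‖pL n‖ := FormalMultilinearSeries.norm_apply_eq_norm_coef.symm
      have h3 : |y ^ (-(n:ℤ))| ≤ ((s : ℝ)/2) ^ n := by
        rw [zpow_neg, zpow_natCast, abs_inv, abs_pow, abs_of_pos hy0, ← inv_pow]
        apply pow_le_pow_left₀ (by positivity)
        rw [inv_le_comm₀ hy0 (by positivity : (0:ℝ) < (s:ℝ)/2)]
        have h4 : 2 / (s:ℝ) < y := lt_of_le_of_lt hRs (Set.mem_Ioi.mp hy)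
        have h5 : ((s:ℝ)/2)⁻¹ = 2 / s := by field_simp
        linarith
      have h5 : ‖pL n‖ * ((s:ℝ)/2) ^ n ≤ CL * (1/2 : ℝ) ^ n := by
        have : ((s:ℝ)/2) ^ n = (s:ℝ) ^ n * (1/2 : ℝ) ^ n := by
          rw [← mul_pow]; ring_nf
        rw [this, ← mul_assoc]
        apply mul_le_mul_of_nonneg_right (hCL n) (by positivity)
      rw [Real.norm_eq_abs, abs_mul, abs_mul]
      have hstep1 : |1 - (n:ℝ)| * |b n| * |y ^ (-(n:ℤ))|
          ≤ ((n:ℝ) + 1) * ‖pL n‖ * ((s:ℝ)/2) ^ n :=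
        mul_le_mul (mul_le_mul h1 h2 (abs_nonneg _) (by positivity)) h3
          (abs_nonneg _) (by positivity)
      have hstep2 : ((n:ℝ) + 1) * ‖pL n‖ * ((s:ℝ)/2) ^ n ≤ u n := by
        rw [hudef]
        nlinarith [h5, Nat.cast_nonneg (α := ℝ) n]
      linarith
    have hTU := tendstoUniformlyOn_tsum hu hbound
    have hhd : ∀ᶠ (t : Finset ℕ) in atTop, ∀ y : ℝ, y ∈ Set.Ioi R →
        HasDerivAt (fun y => ∑ n ∈ t, b n * y ^ (1 - (n:ℤ)))
          (∑ n ∈ t, (1 - (n:ℝ)) * b n * y ^ (-(n:ℤ))) y := by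
      apply Filter.Eventually.of_forall
      intro t y hy
      have hy0 : y ≠ 0 := ne_of_gt (lt_trans hRpos (Set.mem_Ioi.mp hy))
      apply HasDerivAt.fun_sum
      intro n _
      have hz := hasDerivAt_zpow (1 - (n:ℤ)) y (Or.inl hy0)
      have := hz.const_mul (b n)
      refine this.congr_deriv ?_
      have hexp : 1 - (n:ℤ) - 1 = -(n:ℤ) := by ring
      rw [hexp]
      push_cast
      ring
    have hfg : ∀ y : ℝ, y ∈ Set.Ioi R →
        Tendsto (fun t : Finset ℕ => ∑ n ∈ t, b n * y ^ (1 - (n:ℤ))) atTop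
          (𝓝 (∑' n : ℕ, b n * y ^ (1 - (n:ℤ)))) := by
      intro y hy
      have h := hBS y (Set.mem_Ioi.mp hy)
      rw [h.tsum_eq]
      exact h
    have hder : HasDerivAt (fun y : ℝ => ∑' n : ℕ, b n * y ^ (1 - (n:ℤ)))
        (∑' n : ℕ, (1 - (n:ℝ)) * b n * q ^ (-(n:ℤ))) q :=
      hasDerivAt_of_tendstoUniformlyOn isOpen_Ioi hTU hhd hfg (Set.mem_Ioi.mpr hq)
    have hEq : X =ᶠ[nhds q] (fun y => ∑' n : ℕ, b n * y ^ (1 - (n:ℤ))) := by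
      filter_upwards [isOpen_Ioi.mem_nhds (Set.mem_Ioi.mpr hq)] with y hy
      exact ((hBS y (Set.mem_Ioi.mp hy)).tsum_eq).symm
    exact hder.congr_of_eventuallyEq hEq
  · -- summability of derivative series
    intro q hq
    have hq0 : 0 < ‖q‖ := lt_trans hRpos hq
    set u : ℕ → ℝ := fun n => CL * (((n : ℝ) + 1) * (1/2 : ℝ) ^ n) with hudef
    have hu : Summable u := by
      apply Summable.mul_left
      have h1 : Summable (fun n : ℕ => (n : ℝ) ^ 1 * (1/2 : ℝ) ^ n) :=
        summable_pow_mul_geometric_of_norm_lt_one 1 (by rw [Real.norm_eq_abs, abs_of_pos (by norm_num : (0:ℝ) < 1/2)]; norm_num)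
      have h2 : Summable (fun n : ℕ => (1/2 : ℝ) ^ n) :=
        summable_geometric_of_lt_one (by norm_num) (by norm_num)
      exact ((h1.add h2).congr (fun n => by ring))
    apply Summable.of_nonneg_of_le (fun n => norm_nonneg _) ?_ hu
    intro n
    rw [norm_mul, norm_zpow]
    have h1 : ‖(((1 - (n:ℝ)) * b n : ℝ) : ℂ)‖ ≤ ((n:ℝ) + 1) * ‖pL n‖ := by
      rw [Complex.norm_real, Real.norm_eq_abs, abs_mul]
      have ha : |1 - (n : ℝ)| ≤ (n : ℝ) + 1 := by
        rw [abs_le]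
        constructor <;> [linarith [Nat.cast_nonneg (α := ℝ) n]; linarith [Nat.cast_nonneg (α := ℝ) n]]
      have hb : |b n| ≤ ‖pL n‖ := by
        calc |b n| ≤ ‖pL.coeff n‖ := Complex.abs_re_le_norm _
        _ = ‖pL.coeff n‖ := rfl
        _ = ‖pL n‖ := FormalMultilinearSeries.norm_apply_eq_norm_coef.symm
      exact mul_le_mul ha hb (abs_nonneg _) (by positivity)
    have h2 : ‖q‖ ^ (-(n:ℤ)) ≤ ((s:ℝ)/2) ^ n := by
      rw [zpow_neg, zpow_natCast, ← inv_pow]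
      apply pow_le_pow_left₀ (by positivity)
      rw [inv_le_comm₀ hq0 (by positivity : (0:ℝ) < (s:ℝ)/2)]
      have h3 : 2 / (s:ℝ) < ‖q‖ := lt_of_le_of_lt hRs hq
      have h5 : ((s:ℝ)/2)⁻¹ = 2 / s := by field_simp
      linarith
    have hstep1 : ‖(((1 - (n:ℝ)) * b n : ℝ) : ℂ)‖ * ‖q‖ ^ (-(n:ℤ))
        ≤ (((n:ℝ) + 1) * ‖pL n‖) * (((s:ℝ)/2) ^ n) :=
      mul_le_mul h1 h2 (by positivity) (by positivity)
    have hstep2 : (((n:ℝ) + 1) * ‖pL n‖) * (((s:ℝ)/2) ^ n)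
        = ((n:ℝ) + 1) * (‖pL n‖ * (s:ℝ)^n * (1/2:ℝ)^n) := by
      rw [div_pow, ← mul_assoc]
      ring_nf
      simp only [one_div]
    have hstep3 : ((n:ℝ) + 1) * (‖pL n‖ * (s:ℝ)^n * (1/2:ℝ)^n) ≤ u n := by
      rw [hudef]
      have := mul_le_mul_of_nonneg_right (hCL n) (le_of_lt (by positivity : (0:ℝ) < (1/2:ℝ)^n))
      nlinarith [Nat.cast_nonneg (α := ℝ) n]
    linarith

/-- For `σ = 0`, `a ≠ 0` and `k > 0`: expansions of `k^{-ζ_{N+1}(q)}` (resp.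
`k^{ζ̂_{N̂+1}(q)}`) as `k^{-q/a} ∑_{n≥0} p_n q^{-n}`, the expansion of the root itself
with `b_{-1} = 1/a`, differentiability in `q`, and the termwise-differentiated series
`∑_{n≥0} (1-n) b_{n-1} q^{-n}` for the derivative, all series converging absolutely for
`|q| > R`.  Here `b n` denotes the paper's `b_{n-1}`. -/
theorem exponential_extra_root_series_sigma_zero
    (σ A : ℝ) (N Nh : ℕ) (aa ρ ah ρh : ℕ → ℝ)
    (hσ : σ = 0)
    (hpos : ∀ ℓ ∈ Finset.Icc 1 N, 0 < aa ℓ)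
    (hposh : ∀ ℓ ∈ Finset.Icc 1 Nh, 0 < ah ℓ)
    (hρ0 : ρ 0 = 0) (hρh0 : ρh 0 = 0)
    (hmono : ∀ i j, i < j → j ≤ N → ρ i < ρ j)
    (hmonoh : ∀ i j, i < j → j ≤ Nh → ρh i < ρh j)
    (k : ℝ) (hk : 0 < k)
    (ζM ζhM : ℝ → ℝ)
    (hζM : 0 < A → ∀ q : ℝ, 0 < q → ρ N < ζM q ∧
        psi σ A N Nh aa ρ ah ρh (ζM q : ℂ) = (q : ℂ))
    (hζhM : A < 0 → ∀ q : ℝ, 0 < q → ρh Nh < ζhM q ∧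
        psi σ A N Nh aa ρ ah ρh (-(ζhM q : ℝ) : ℂ) = (q : ℂ)) :
    (0 < A →
      ∃ R > (0 : ℝ), ∃ p b : ℕ → ℝ, b 0 = 1 / A ∧
        -- (a)
        (∀ q : ℂ, R < ‖q‖ → Summable (fun n : ℕ => ‖(p n : ℂ) * q ^ (-(n : ℤ))‖)) ∧
        (∀ q : ℝ, R < q →
          k ^ (-(ζM q)) = k ^ (-(q / A)) * ∑' n : ℕ, p n * q ^ (-(n : ℤ))) ∧
        -- (b)
        (∀ q : ℝ, R < q →
          ζM q = ∑' n : ℕ, b n * q ^ (1 - (n : ℤ)) ∧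
          HasDerivAt ζM (∑' n : ℕ, (1 - (n : ℝ)) * b n * q ^ (-(n : ℤ))) q) ∧
        (∀ q : ℂ, R < ‖q‖ →
          Summable (fun n : ℕ => ‖(((1 - (n : ℝ)) * b n : ℝ) : ℂ) * q ^ (-(n : ℤ))‖))) ∧
    (A < 0 →
      ∃ R > (0 : ℝ), ∃ p b : ℕ → ℝ, b 0 = 1 / A ∧
        (∀ q : ℂ, R < ‖q‖ → Summable (fun n : ℕ => ‖(p n : ℂ) * q ^ (-(n : ℤ))‖)) ∧
        (∀ q : ℝ, R < q →
          k ^ (ζhM q) = k ^ (-(q / A)) * ∑' n : ℕ, p n * q ^ (-(n : ℤ))) ∧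
        (∀ q : ℝ, R < q →
          -(ζhM q) = ∑' n : ℕ, b n * q ^ (1 - (n : ℤ)) ∧
          HasDerivAt ζhM (-∑' n : ℕ, (1 - (n : ℝ)) * b n * q ^ (-(n : ℤ))) q) ∧
        (∀ q : ℂ, R < ‖q‖ →
          Summable (fun n : ℕ => ‖(((1 - (n : ℝ)) * b n : ℝ) : ℂ) * q ^ (-(n : ℤ))‖))) := by
  subst hσ
  constructor
  · intro hA
    exact core_lemma A N Nh aa ρ ah ρh hpos hposh hρ0 hρh0 hmono hmonoh hA k hk ζM (hζM hA)
  · intro hA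
    have hA' : 0 < -A := by linarith
    have hX : ∀ q : ℝ, 0 < q → ρh Nh < ζhM q ∧
        psi 0 (-A) Nh N ah ρh aa ρ (ζhM q : ℂ) = (q : ℂ) := by
      intro q hq
      obtain ⟨h1, h2⟩ := hζhM hA q hq
      refine ⟨h1, ?_⟩
      rw [← psi_neg 0 A N Nh aa ρ ah ρh]
      push_cast at h2 ⊢
      exact h2
    have hk' : (0 : ℝ) < k⁻¹ := by positivity
    obtain ⟨R, hR, p', b', hb0, hsum1, heq1, heq2, hsum2⟩ :=
      core_lemma (-A) Nh N ah ρh aa ρ hposh hpos hρh0 hρ0 hmonoh hmono hA' k⁻¹ hk' ζhM hX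
    refine ⟨R, hR, p', fun n => -(b' n), ?_, hsum1, ?_, ?_, ?_⟩
    · show -(b' 0) = 1 / A
      rw [hb0]; field_simp
    · intro q hq
      have hthis := heq1 q hq
      have e1 : (k⁻¹ : ℝ) ^ (-(ζhM q)) = k ^ (ζhM q) := by
        rw [Real.inv_rpow hk.le, Real.rpow_neg hk.le, inv_inv]
      have e2 : (k⁻¹ : ℝ) ^ (-(q / -A)) = k ^ (-(q / A)) := by
        rw [show -(q / -A) = q / A by field_simp, Real.inv_rpow hk.le, ← Real.rpow_neg hk.le]
      rw [e1, e2] at hthis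
      exact hthis
    · intro q hq
      obtain ⟨hs1, hs2⟩ := heq2 q hq
      constructor
      · have hfe : (fun n : ℕ => -(b' n) * q ^ (1 - (n:ℤ)))
            = fun n : ℕ => -((b' n) * q ^ (1 - (n:ℤ))) := funext fun n => by ring
        rw [hfe, tsum_neg, ← hs1]
      · have hfe : (fun n : ℕ => (1 - (n:ℝ)) * -(b' n) * q ^ (-(n:ℤ)))
            = fun n : ℕ => -((1 - (n:ℝ)) * (b' n) * q ^ (-(n:ℤ))) := funext fun n => by ring
        rw [hfe, tsum_neg, neg_neg]
        exact hs2
    · intro q hq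
      apply ((hsum2 q hq).congr)
      intro n
      rw [show (((1 - (n:ℝ)) * -(b' n) : ℝ) : ℂ) = -((((1 - (n:ℝ)) * (b' n) : ℝ)) : ℂ) by
        push_cast; ring, neg_mul, norm_neg]
end

section
/- For each 1 ≤ ℓ ≤ N there exist R > 0 and a sequence (b_n)_{n≥0} of real numbers with b_0 = ρ_ℓ and b_1 = −a_ℓ ρ_ℓ such that the series ∑_{n=0}^∞ b_n q^{−n} converges absolutely for every q ∈ ℂ with |q| > R, its sum z(q) satisfies ψ(z(q)) = q for every such q, and z(q) = ζ_ℓ(q) for every real q > R. Analogously, for each 1 ≤ ℓ ≤ N̂ there exist R > 0 and real (b̂_n)_{n≥0} with b̂_0 = −ρ̂_ℓ such that −∑_{n=0}^∞ b̂_n q^{−n} converges absolutely for |q| > R, satisfies ψ(−∑_{n=0}^∞ b̂_n q^{−n}) = q there, and equals −ζ̂_ℓ(q) for every real q > R. -/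
open Filter Set Complex
open scoped Topology

local notation "conj'" => starRingEnd ℂ

lemma key (ψ : ℂ → ℂ) (x₀ c : ℝ) (hx : x₀ ≠ 0) (hc : c ≠ 0)
    (g : ℂ → ℂ) (hg : AnalyticAt ℂ g (x₀ : ℂ))
    (hgc : ∀ z, g (conj' z) = conj' (g z))
    (hpsi : ∀ z, ψ z = g z + z * ((c : ℂ) / ((x₀ : ℂ) - z))) :
    ∃ r > (0 : ℝ), ∃ ε > (0 : ℝ), ∃ b : ℕ → ℝ, b 0 = x₀ ∧ b 1 = -(c * x₀) ∧
      (∀ u : ℂ, ‖u‖ < r → Summable (fun n => ‖(b n : ℂ) * u ^ n‖)) ∧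
      (∀ u : ℂ, ‖u‖ < r → u ≠ 0 → ψ (∑' n, (b n : ℂ) * u ^ n) = 1 / u) ∧
      (∀ u : ℂ, ‖u‖ < r → u ≠ 0 → ∀ w : ℂ, ‖w - (x₀ : ℂ)‖ < ε → w ≠ (x₀ : ℂ) →
        ψ w = 1 / u → w = ∑' n, (b n : ℂ) * u ^ n) := by
  classical
  set φ : ℂ → ℂ := fun z => ((x₀ : ℂ) - z) * g z + z * (c : ℂ) with hφdef
  have hφx : φ (x₀ : ℂ) = (x₀ : ℂ) * (c : ℂ) := by simp [hφdef]
  have hxc : ((x₀ : ℂ) * (c : ℂ)) ≠ 0 :=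
    mul_ne_zero (by exact_mod_cast hx) (by exact_mod_cast hc)
  have hφne : φ (x₀ : ℂ) ≠ 0 := by rw [hφx]; exact hxc
  have hφan : AnalyticAt ℂ φ (x₀ : ℂ) := by
    apply AnalyticAt.add
    · exact (analyticAt_const.sub (analyticAt_id)).mul hg
    · exact analyticAt_id.mul analyticAt_const
  set F : ℂ → ℂ := fun z => ((x₀ : ℂ) - z) / φ z with hFdef
  have hFx : F (x₀ : ℂ) = 0 := by simp [hFdef]
  have hFan : AnalyticAt ℂ F (x₀ : ℂ) :=
    (analyticAt_const.sub analyticAt_id).div hφan hφne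
  -- strict derivative of F at x₀
  set d : ℂ := -((x₀ : ℂ) * (c : ℂ))⁻¹ with hddef
  have hd : d ≠ 0 := by rw [hddef]; exact neg_ne_zero.2 (inv_ne_zero hxc)
  have hφ' : HasStrictDerivAt φ (-(g (x₀:ℂ)) + (c:ℂ)) (x₀ : ℂ) := by
    have h1 : HasStrictDerivAt (fun z : ℂ => ((x₀ : ℂ) - z)) (-1) (x₀ : ℂ) := by
      simpa using (hasStrictDerivAt_id (x₀:ℂ)).const_sub (x₀ : ℂ)
    have h2 : HasStrictDerivAt g (deriv g (x₀:ℂ)) (x₀ : ℂ) := by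
      rcases hg with ⟨p, hp⟩
      rw [hp.deriv]
      exact hp.hasStrictDerivAt
    have h3 : HasStrictDerivAt (fun z : ℂ => z * (c : ℂ)) (c : ℂ) (x₀ : ℂ) := by
      simpa using (hasStrictDerivAt_id (x₀:ℂ)).mul_const (c : ℂ)
    have := (h1.mul h2).add h3
    refine this.congr_deriv ?_
    simp
  have hF' : HasStrictDerivAt F d (x₀ : ℂ) := by
    have h1 : HasStrictDerivAt (fun z : ℂ => ((x₀ : ℂ) - z)) (-1) (x₀ : ℂ) := by
      simpa using (hasStrictDerivAt_id (x₀:ℂ)).const_sub (x₀ : ℂ)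
    have := h1.div hφ' hφne
    refine this.congr_deriv ?_
    rw [hφx, hddef]
    rw [sub_self, zero_mul, sub_zero]
    field_simp
  -- the local inverse
  set i : ℂ ≃L[ℂ] ℂ := ContinuousLinearEquiv.unitsEquivAut ℂ (Units.mk0 d hd) with hidef
  have hsf : HasStrictFDerivAt F (i : ℂ →L[ℂ] ℂ) (x₀ : ℂ) := hF'.hasStrictFDerivAt_equiv hd
  set homeo : OpenPartialHomeomorph ℂ ℂ := hsf.toOpenPartialHomeomorph F with hhdef
  have hcoe : ⇑homeo = F := hsf.toOpenPartialHomeomorph_coe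
  have hsource : (x₀ : ℂ) ∈ homeo.source := hsf.mem_toOpenPartialHomeomorph_source
  have htarget : (0 : ℂ) ∈ homeo.target := by
    have := hsf.image_mem_toOpenPartialHomeomorph_target
    rwa [hFx] at this
  set G : ℂ → ℂ := ⇑homeo.symm with hGdef
  have hG0 : G 0 = (x₀ : ℂ) := by
    have := homeo.left_inv hsource
    rwa [hcoe, hFx] at this
  -- power series of F
  obtain ⟨p, hFp⟩ := hFan
  have hp1 : p 1 = (continuousMultilinearCurryFin1 ℂ ℂ ℂ).symm (i : ℂ →L[ℂ] ℂ) := by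
    have hco : p.coeff 1 = d := by
      have h1 := hFp.deriv
      have h2 := hF'.hasDerivAt.deriv
      rw [h1] at h2
      exact h2
    rw [← FormalMultilinearSeries.mkPiRing_coeff_eq p 1, hco]
    ext v
    simp [hidef, ContinuousLinearEquiv.unitsEquivAut_apply, mul_comm]
  have hq : HasFPowerSeriesAt G (p.leftInv (i : ℂ ≃L[ℂ] ℂ) (x₀ : ℂ)) 0 := by
    have h := homeo.hasFPowerSeriesAt_symm hsource (by rwa [hcoe]) hp1
    rwa [hcoe, hFx] at h
  set q : FormalMultilinearSeries ℂ ℂ ℂ := p.leftInv (i : ℂ ≃L[ℂ] ℂ) (x₀ : ℂ) with hqdef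
  clear_value q
  -- conjugation symmetry of F
  have hFconj : ∀ z, F (conj' z) = conj' (F z) := by
    intro z
    simp only [hFdef, hφdef, map_div₀, map_add, map_mul, map_sub, Complex.conj_ofReal, hgc]
  -- continuity facts
  have hGcont : ContinuousAt G 0 := homeo.continuousAt_symm htarget
  have hconjT : Filter.Tendsto (fun z : ℂ => conj' z) (𝓝 (0:ℂ)) (𝓝 (0:ℂ)) := by
    have hcont : Continuous fun z : ℂ => conj' z := continuous_star
    simpa using hcont.tendsto (0 : ℂ)
  have hs2 : ∀ᶠ z in 𝓝 (x₀ : ℂ), φ z ≠ 0 := hφan.continuousAt.eventually_ne hφne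
  obtain ⟨δ, hδpos, hδball⟩ :=
    Metric.mem_nhds_iff.1 (Filter.inter_mem (homeo.open_source.mem_nhds hsource) hs2)
  have hballev : ∀ᶠ w : ℂ in 𝓝 (x₀ : ℂ), dist w (x₀ : ℂ) < δ :=
    Metric.ball_mem_nhds _ hδpos
  have hGt : Filter.Tendsto G (𝓝 0) (𝓝 (x₀ : ℂ)) := by
    have := hGcont.tendsto
    rwa [hG0] at this
  have hsum := hasFPowerSeriesAt_iff.1 hq
  have ev1 : ∀ᶠ u : ℂ in 𝓝 0, u ∈ homeo.target := homeo.open_target.mem_nhds htarget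
  have ev2 : ∀ᶠ u : ℂ in 𝓝 0, conj' u ∈ homeo.target := hconjT.eventually ev1
  have evG : ∀ᶠ u : ℂ in 𝓝 0, dist (G u) (x₀ : ℂ) < δ := hGt.eventually hballev
  have evGc : ∀ᶠ u : ℂ in 𝓝 0, dist (G (conj' u)) (x₀ : ℂ) < δ := hconjT.eventually evG
  -- realness of the coefficients
  set qc : FormalMultilinearSeries ℂ ℂ ℂ :=
    fun n => ContinuousMultilinearMap.mkPiRing ℂ (Fin n) (conj' (q.coeff n)) with hqcdef
  have hqc_coeff : ∀ n, qc.coeff n = conj' (q.coeff n) := by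
    intro n
    have h : qc.coeff n
        = (ContinuousMultilinearMap.mkPiRing ℂ (Fin n) (conj' (q.coeff n))) (fun _ => (1 : ℂ)) :=
      rfl
    rw [h, ContinuousMultilinearMap.mkPiRing_apply]
    simp
  have hH : HasFPowerSeriesAt (fun u => conj' (G (conj' u))) qc 0 := by
    rw [hasFPowerSeriesAt_iff]
    filter_upwards [hconjT.eventually hsum] with z hz
    have hz' := hz.mapL (Complex.conjCLE.toContinuousLinearMap)
    rw [zero_add] at hz' ⊢
    have hfeq : (fun n : ℕ =>
        (Complex.conjCLE.toContinuousLinearMap) ((conj' z) ^ n • q.coeff n))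
        = fun n : ℕ => z ^ n • qc.coeff n := by
      funext n
      rw [hqc_coeff n]
      simp only [ContinuousLinearEquiv.coe_coe, Complex.conjCLE_apply, smul_eq_mul, map_mul,
        map_pow, Complex.conj_conj]
    rw [hfeq] at hz'
    exact hz'
  have heqHG : ∀ᶠ u : ℂ in 𝓝 0, conj' (G (conj' u)) = G u := by
    filter_upwards [ev1, ev2, evG, evGc] with u h1 h2 h3 h4
    have hrinv2 : F (G (conj' u)) = conj' u := by
      have := homeo.right_inv h2
      rwa [hcoe] at this
    have hw : F (conj' (G (conj' u))) = u := by
      rw [hFconj, hrinv2]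
      simp
    have hGu : F (G u) = u := by
      have := homeo.right_inv h1
      rwa [hcoe] at this
    have hdistconj : dist (conj' (G (conj' u))) (x₀ : ℂ) = dist (G (conj' u)) (x₀ : ℂ) := by
      rw [dist_eq_norm, dist_eq_norm]
      have h : conj' (G (conj' u)) - (x₀ : ℂ) = conj' (G (conj' u) - (x₀ : ℂ)) := by
        rw [map_sub, Complex.conj_ofReal]
      rw [h]
      exact RCLike.norm_conj _
    have hwmem : conj' (G (conj' u)) ∈ homeo.source := by
      refine (hδball ?_).1
      rw [Metric.mem_ball, hdistconj]
      exact h4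
    have hGmem : G u ∈ homeo.source := by
      refine (hδball ?_).1
      rw [Metric.mem_ball]
      exact h3
    refine homeo.injOn hwmem hGmem ?_
    show (⇑homeo) _ = (⇑homeo) _
    rw [hcoe, hw, hGu]
  have hqeq : qc = q := hH.eq_formalMultilinearSeries_of_eventually hq heqHG
  have hreal : ∀ n, conj' (q.coeff n) = q.coeff n := by
    intro n
    rw [← hqc_coeff n, hqeq]
  set b : ℕ → ℝ := fun n => (q.coeff n).re with hbdef
  have hb : ∀ n, ((b n : ℝ) : ℂ) = q.coeff n := fun n => Complex.conj_eq_iff_re.1 (hreal n)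
  -- the first two coefficients
  have hq0 : q.coeff 0 = (x₀ : ℂ) := by
    have h := hq.coeff_zero (fun _ => (1 : ℂ))
    rw [hG0] at h
    exact h
  have hb0 : b 0 = x₀ := by
    have := hb 0
    rw [hq0] at this
    exact_mod_cast this
  have hstrictG : HasStrictDerivAt G d⁻¹ 0 := by
    have h := hF'.to_localInverse hd
    rw [hFx] at h
    exact h
  have hq1 : q.coeff 1 = -((x₀ : ℂ) * (c : ℂ)) := by
    have h := hq.deriv
    rw [hstrictG.hasDerivAt.deriv] at h
    have h' : q.coeff 1 = d⁻¹ := h.symm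
    rw [h', hddef, inv_neg, inv_inv]
  have hb1 : b 1 = -(c * x₀) := by
    have h := hb 1
    rw [hq1] at h
    have h2 : ((b 1 : ℝ) : ℂ) = ((-(c * x₀) : ℝ) : ℂ) := by
      rw [h]
      push_cast
      ring
    exact_mod_cast h2
  -- radius and ball
  obtain ⟨r0, hr0pos, hr0rad⟩ := ENNReal.lt_iff_exists_nnreal_btwn.1 hq.radius_pos
  obtain ⟨r1, hr1pos, hr1⟩ :=
    Metric.mem_nhds_iff.1 (ev1.and (ev2.and (evG.and (evGc.and hsum))))
  set r : ℝ := min r1 r0 with hrdef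
  have hrpos : 0 < r := lt_min hr1pos (by exact_mod_cast hr0pos)
  have hmem : ∀ u : ℂ, ‖u‖ < r → u ∈ Metric.ball (0 : ℂ) r1 := by
    intro u hu
    rw [Metric.mem_ball, dist_zero_right]
    exact lt_of_lt_of_le hu (min_le_left _ _)
  -- the sum of the series is G u
  have hhassum : ∀ u : ℂ, ‖u‖ < r → HasSum (fun n => (b n : ℂ) * u ^ n) (G u) := by
    intro u hu
    have h5 := (hr1 (hmem u hu)).2.2.2.2
    rw [zero_add] at h5
    have heqf : (fun n : ℕ => (b n : ℂ) * u ^ n) = fun n => u ^ n • q.coeff n := by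
      funext n
      rw [← hb n, smul_eq_mul, mul_comm]
    rw [heqf]
    exact h5
  have htsum : ∀ u : ℂ, ‖u‖ < r → (∑' n, (b n : ℂ) * u ^ n) = G u := by
    intro u hu
    exact (hhassum u hu).tsum_eq
  refine ⟨r, hrpos, δ, hδpos, b, hb0, hb1, ?_, ?_, ?_⟩
  · -- summability
    intro u hu
    have hrad : (‖u‖₊ : ENNReal) < q.radius := by
      refine lt_trans ?_ hr0rad
      have : ‖u‖₊ < r0 := by
        have : ‖u‖ < (r0 : ℝ) := lt_of_lt_of_le hu (min_le_right _ _)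
        exact_mod_cast this
      exact_mod_cast this
    have hs := q.summable_norm_apply (mem_emetric_ball_zero_iff.2 hrad)
    refine hs.congr fun n => ?_
    rw [FormalMultilinearSeries.apply_eq_pow_smul_coeff, smul_eq_mul, ← hb n]
    simp [norm_mul, mul_comm]
  · -- the equation ψ = 1/u
    intro u hu hune
    obtain ⟨h1, h2, h3, h4, h5⟩ := hr1 (hmem u hu)
    have hFGu : F (G u) = u := by
      have := homeo.right_inv h1
      rwa [hcoe] at this
    have hGball := hδball (by rw [Metric.mem_ball]; exact h3)
    have hGsrc := hGball.1
    have hφGu : φ (G u) ≠ 0 := hGball.2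
    have hxGu : (x₀ : ℂ) - G u = u * φ (G u) := by
      have h := hFGu
      rw [hFdef] at h
      rw [div_eq_iff hφGu] at h
      rw [h]
    have hGne : (x₀ : ℂ) - G u ≠ 0 := by
      rw [hxGu]
      exact mul_ne_zero hune hφGu
    rw [htsum u hu, hpsi (G u)]
    have hφval : φ (G u) = ((x₀ : ℂ) - G u) * g (G u) + G u * (c : ℂ) := rfl
    rw [hφval] at hxGu
    field_simp
    linear_combination -hxGu
  · -- uniqueness
    intro u hu hune w hwδ hwne hψw
    obtain ⟨h1, h2, h3, h4, h5⟩ := hr1 (hmem u hu)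
    have hwball := hδball (by rw [Metric.mem_ball, dist_eq_norm]; exact hwδ)
    have hwsrc := hwball.1
    have hφw : φ w ≠ 0 := hwball.2
    have hxw : (x₀ : ℂ) - w ≠ 0 := sub_ne_zero.2 (Ne.symm hwne)
    have hFGu : F (G u) = u := by
      have := homeo.right_inv h1
      rwa [hcoe] at this
    have hGball := hδball (by rw [Metric.mem_ball]; exact h3)
    have hGsrc := hGball.1
    have hFw : F w = u := by
      rw [hpsi w] at hψw
      have hphiw : u * φ w = (x₀ : ℂ) - w := by
        have hφval : φ w = ((x₀ : ℂ) - w) * g w + w * (c : ℂ) := rfl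
        rw [hφval]
        field_simp at hψw
        linear_combination hψw
      rw [hFdef]
      show ((x₀ : ℂ) - w) / φ w = u
      rw [← hphiw]
      exact mul_div_cancel_right₀ u hφw
    have hwG : w = G u := by
      refine homeo.injOn hwsrc hGsrc ?_
      show (⇑homeo) _ = (⇑homeo) _
      rw [hcoe, hFw, hFGu]
    rw [htsum u hu]
    exact hwG

lemma psi_ofReal (σ A : ℝ) (N Nh : ℕ) (aa ρ ah ρh : ℕ → ℝ) (x : ℝ) :
    psi σ A N Nh aa ρ ah ρh (x : ℂ)
      = ((σ^2*x^2/2 + A*x + x * ∑ k ∈ Finset.Icc 1 N, aa k / (ρ k - x)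
          - x * ∑ k ∈ Finset.Icc 1 Nh, ah k / (ρh k + x) : ℝ) : ℂ) := by
  unfold psi
  push_cast
  ring


/-- Series expansions of the "interior" roots of `ψ = q`: for each `1 ≤ ℓ ≤ N` there is a
series `∑_{n≥0} b_n q^{-n}` with `b_0 = ρ_ℓ`, `b_1 = -a_ℓ ρ_ℓ`, converging absolutely for
`|q| > R`, whose sum solves `ψ = q` and equals `ζ_ℓ(q)` for real `q > R`; analogously for
each `1 ≤ ℓ ≤ N̂` with `b̂_0 = -ρ̂_ℓ`, the sum being `-ζ̂_ℓ(q)`. -/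
theorem interior_roots_series
    (σ A : ℝ) (N Nh : ℕ) (aa ρ ah ρh : ℕ → ℝ)
    (hσ : 0 ≤ σ)
    (hpos : ∀ ℓ ∈ Finset.Icc 1 N, 0 < aa ℓ)
    (hposh : ∀ ℓ ∈ Finset.Icc 1 Nh, 0 < ah ℓ)
    (hρ0 : ρ 0 = 0) (hρh0 : ρh 0 = 0)
    (hmono : ∀ i j, i < j → j ≤ N → ρ i < ρ j)
    (hmonoh : ∀ i j, i < j → j ≤ Nh → ρh i < ρh j)
    -- `ζ ℓ q` is the unique solution of `ψ = q` in `(ρ_{ℓ-1}, ρ_ℓ)` and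
    -- `-(ζh ℓ q)` the unique one in `(-ρ̂_ℓ, -ρ̂_{ℓ-1})`
    (ζ ζh : ℕ → ℝ → ℝ)
    (hζ : ∀ ℓ ∈ Finset.Icc 1 N, ∀ q : ℝ, 0 < q →
        ζ ℓ q ∈ Set.Ioo (ρ (ℓ - 1)) (ρ ℓ) ∧
        psi σ A N Nh aa ρ ah ρh (ζ ℓ q : ℂ) = (q : ℂ))
    (hζh : ∀ ℓ ∈ Finset.Icc 1 Nh, ∀ q : ℝ, 0 < q →
        -(ζh ℓ q) ∈ Set.Ioo (-(ρh ℓ)) (-(ρh (ℓ - 1))) ∧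
        psi σ A N Nh aa ρ ah ρh (-(ζh ℓ q : ℝ) : ℂ) = (q : ℂ)) :
    (∀ ℓ ∈ Finset.Icc 1 N,
      ∃ R > (0 : ℝ), ∃ b : ℕ → ℝ, b 0 = ρ ℓ ∧ b 1 = -(aa ℓ * ρ ℓ) ∧
        (∀ q : ℂ, R < ‖q‖ →
          Summable (fun n : ℕ => ‖(b n : ℂ) * q ^ (-(n : ℤ))‖) ∧
          psi σ A N Nh aa ρ ah ρh (∑' n : ℕ, (b n : ℂ) * q ^ (-(n : ℤ))) = q) ∧
        (∀ q : ℝ, R < q →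
          (∑' n : ℕ, (b n : ℂ) * (q : ℂ) ^ (-(n : ℤ))) = (ζ ℓ q : ℂ))) ∧
    (∀ ℓ ∈ Finset.Icc 1 Nh,
      ∃ R > (0 : ℝ), ∃ bh : ℕ → ℝ, bh 0 = -(ρh ℓ) ∧
        (∀ q : ℂ, R < ‖q‖ →
          Summable (fun n : ℕ => ‖(bh n : ℂ) * q ^ (-(n : ℤ))‖) ∧
          psi σ A N Nh aa ρ ah ρh (∑' n : ℕ, (bh n : ℂ) * q ^ (-(n : ℤ))) = q) ∧
        (∀ q : ℝ, R < q →
          (∑' n : ℕ, (bh n : ℂ) * (q : ℂ) ^ (-(n : ℤ))) = (-(ζh ℓ q : ℝ) : ℂ))) := by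
  constructor
  ·
    intro ℓ hℓ
    obtain ⟨hℓ1, hℓN⟩ := Finset.mem_Icc.1 hℓ
    have hρℓpos : 0 < ρ ℓ := by
      have := hmono 0 ℓ (by omega) hℓN
      rwa [hρ0] at this
    have haaℓ : 0 < aa ℓ := hpos ℓ hℓ
    set g : ℂ → ℂ := fun z =>
      (σ : ℂ) ^ 2 * z ^ 2 / 2 + (A : ℂ) * z
        + z * ∑ k ∈ (Finset.Icc 1 N).erase ℓ, (aa k : ℂ) / ((ρ k : ℂ) - z)
        - z * ∑ k ∈ Finset.Icc 1 Nh, (ah k : ℂ) / ((ρh k : ℂ) + z) with hgdef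
    have hpsig : ∀ z, psi σ A N Nh aa ρ ah ρh z
        = g z + z * ((aa ℓ : ℂ) / (((ρ ℓ : ℝ) : ℂ) - z)) := by
      intro z
      rw [hgdef]
      unfold psi
      rw [← Finset.add_sum_erase _ (fun k => (aa k : ℂ) / ((ρ k : ℂ) - z)) hℓ]
      ring
    have hg : AnalyticAt ℂ g ((ρ ℓ : ℝ) : ℂ) := by
      rw [hgdef]
      have h1 : AnalyticAt ℂ (fun z : ℂ => (σ : ℂ) ^ 2 * z ^ 2 / 2) ((ρ ℓ : ℝ) : ℂ) :=
        (analyticAt_const.mul (analyticAt_id.pow 2)).div analyticAt_const (by norm_num)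
      have h2 : AnalyticAt ℂ (fun z : ℂ => (A : ℂ) * z) ((ρ ℓ : ℝ) : ℂ) :=
        analyticAt_const.mul analyticAt_id
      have h3 : AnalyticAt ℂ
          (fun z : ℂ => ∑ k ∈ (Finset.Icc 1 N).erase ℓ, (aa k : ℂ) / ((ρ k : ℂ) - z))
          ((ρ ℓ : ℝ) : ℂ) := by
        apply Finset.analyticAt_fun_sum
        intro k hk
        obtain ⟨hkne, hkmem⟩ := Finset.mem_erase.1 hk
        obtain ⟨hk1, hkN⟩ := Finset.mem_Icc.1 hkmem
        have hne : ρ k ≠ ρ ℓ := by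
          rcases lt_or_gt_of_ne hkne with h | h
          · exact ne_of_lt (hmono k ℓ h hℓN)
          · exact (ne_of_lt (hmono ℓ k h hkN)).symm
        have hne' : (ρ k : ℂ) - ((ρ ℓ : ℝ) : ℂ) ≠ 0 := by
          rw [sub_ne_zero]
          exact_mod_cast hne
        exact analyticAt_const.div (analyticAt_const.sub analyticAt_id) hne'
      have h4 : AnalyticAt ℂ
          (fun z : ℂ => ∑ k ∈ Finset.Icc 1 Nh, (ah k : ℂ) / ((ρh k : ℂ) + z))
          ((ρ ℓ : ℝ) : ℂ) := by
        apply Finset.analyticAt_fun_sum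
        intro k hk
        obtain ⟨hk1, hkN⟩ := Finset.mem_Icc.1 hk
        have hρhk : 0 < ρh k := by
          have := hmonoh 0 k (by omega) hkN
          rwa [hρh0] at this
        have hne' : (ρh k : ℂ) + ((ρ ℓ : ℝ) : ℂ) ≠ 0 := by
          have h : ((ρh k + ρ ℓ : ℝ) : ℂ) ≠ 0 := by
            rw [Complex.ofReal_ne_zero]
            positivity
          push_cast at h
          exact h
        exact analyticAt_const.div (analyticAt_const.add analyticAt_id) hne'
      exact ((h1.add h2).add (analyticAt_id.mul h3)).sub (analyticAt_id.mul h4)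
    have hgc : ∀ z, g (conj' z) = conj' (g z) := by
      intro z
      rw [hgdef]
      simp only [map_add, map_sub, map_mul, map_div₀, map_pow, map_sum, map_ofNat,
        Complex.conj_ofReal]
    obtain ⟨r, hr, ε, hε, b, hb0, hb1, hsummable, hpsival, huniq⟩ :=
      key (psi σ A N Nh aa ρ ah ρh) (ρ ℓ) (aa ℓ) (ne_of_gt hρℓpos) (ne_of_gt haaℓ)
        g hg hgc hpsig
    set ε' : ℝ := min ε (ρ ℓ) with hε'def
    have hε'pos : 0 < ε' := lt_min hε hρℓpos
    have hε'le : ε' ≤ ε := min_le_left _ _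
    set M : ℝ := σ^2*(ρ ℓ)^2/2 + |A| * (ρ ℓ) + (ρ ℓ/ε') * ∑ k ∈ Finset.Icc 1 N, aa k
      with hMdef
    set R : ℝ := max (max (1/r) M) 1 with hRdef
    have hRpos : (0:ℝ) < R := lt_of_lt_of_le one_pos (le_max_right _ _)
    -- the upper bound for ψ on (ρ_{ℓ-1}, ρ_ℓ - ε']
    have hbound : ∀ x : ℝ, 0 < x → ρ (ℓ-1) < x → x ≤ ρ ℓ - ε' →
        σ^2*x^2/2 + A*x + x * ∑ k ∈ Finset.Icc 1 N, aa k / (ρ k - x)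
          - x * ∑ k ∈ Finset.Icc 1 Nh, ah k / (ρh k + x) ≤ M := by
      intro x hx0 hxgt hxle
      have hxρ : x ≤ ρ ℓ := by linarith
      have t1 : σ^2*x^2/2 ≤ σ^2*(ρ ℓ)^2/2 := by
        have hx2 : x^2 ≤ (ρ ℓ)^2 := by nlinarith
        have := mul_le_mul_of_nonneg_left hx2 (sq_nonneg σ)
        linarith
      have t2 : A*x ≤ |A| * (ρ ℓ) := by
        have h1 : A*x ≤ |A| * x := mul_le_mul_of_nonneg_right (le_abs_self A) hx0.le
        have h2 : |A| * x ≤ |A| * (ρ ℓ) := mul_le_mul_of_nonneg_left hxρ (abs_nonneg A)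
        linarith
      have t3 : x * ∑ k ∈ Finset.Icc 1 N, aa k / (ρ k - x)
          ≤ (ρ ℓ/ε') * ∑ k ∈ Finset.Icc 1 N, aa k := by
        rw [Finset.mul_sum, Finset.mul_sum]
        apply Finset.sum_le_sum
        intro k hk
        obtain ⟨hk1, hkN⟩ := Finset.mem_Icc.1 hk
        rcases lt_or_ge k ℓ with hkl | hkl
        · have hρk : ρ k ≤ ρ (ℓ-1) := by
            rcases lt_or_eq_of_le (by omega : k ≤ ℓ - 1) with h | h
            · exact (hmono k (ℓ-1) h (by omega)).le
            · rw [h]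
          have hden : ρ k - x < 0 := by linarith
          have hterm : aa k / (ρ k - x) < 0 := div_neg_of_pos_of_neg (hpos k hk) hden
          have h1 : x * (aa k / (ρ k - x)) ≤ 0 :=
            mul_nonpos_of_nonneg_of_nonpos hx0.le hterm.le
          have h2 : 0 ≤ ρ ℓ/ε' * aa k :=
            mul_nonneg (div_nonneg hρℓpos.le hε'pos.le) (hpos k hk).le
          linarith
        · have hρk : ρ ℓ ≤ ρ k := by
            rcases lt_or_eq_of_le hkl with h | h
            · exact (hmono ℓ k h hkN).le
            · rw [← h]
          have hden : ε' ≤ ρ k - x := by linarith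
          have hterm : aa k / (ρ k - x) ≤ aa k / ε' :=
            div_le_div_of_nonneg_left (hpos k hk).le hε'pos hden
          calc x * (aa k / (ρ k - x)) ≤ ρ ℓ * (aa k / ε') := by
                apply mul_le_mul hxρ hterm
                  (div_nonneg (hpos k hk).le (by linarith)) hρℓpos.le
            _ = ρ ℓ/ε' * aa k := by ring
      have t4 : 0 ≤ x * ∑ k ∈ Finset.Icc 1 Nh, ah k / (ρh k + x) := by
        apply mul_nonneg hx0.le
        apply Finset.sum_nonneg
        intro k hk
        obtain ⟨hk1, hkN⟩ := Finset.mem_Icc.1 hk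
        have hρhk : 0 < ρh k := by
          have := hmonoh 0 k (by omega) hkN
          rwa [hρh0] at this
        have := hposh k hk
        positivity
      linarith
    refine ⟨R, hRpos, b, hb0, ?_, ?_, ?_⟩
    · exact hb1
    · intro q hq'
      have hqnorm : (0:ℝ) < ‖q‖ := lt_trans hRpos hq'
      have hq0 : q ≠ 0 := by
        intro h
        rw [h, norm_zero] at hqnorm
        exact lt_irrefl _ hqnorm
      have hu : ‖q⁻¹‖ < r := by
        rw [norm_inv]
        have h1 : 1/r < ‖q‖ :=
          lt_of_le_of_lt (le_trans (le_max_left _ _) (le_max_left _ _)) hq'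
        have h2 := (one_div_lt hr hqnorm).1 h1
        rwa [one_div] at h2
      constructor
      · have := hsummable q⁻¹ hu
        simpa only [zpow_neg, zpow_natCast, ← inv_pow] using this
      · have := hpsival q⁻¹ hu (inv_ne_zero hq0)
        rw [one_div, inv_inv] at this
        simpa only [zpow_neg, zpow_natCast, ← inv_pow] using this
    · intro q hq'
      have hq1 : (1:ℝ) < q := lt_of_le_of_lt (le_max_right _ _) hq'
      have hq0 : (0:ℝ) < q := by linarith
      obtain ⟨hζmem, hζeq⟩ := hζ ℓ hℓ q hq0
      obtain ⟨hzgt, hzlt⟩ := hζmem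
      have hρprev : 0 ≤ ρ (ℓ - 1) := by
        rcases Nat.lt_or_ge 0 (ℓ - 1) with h | h
        · have := hmono 0 (ℓ-1) h (by omega)
          rw [hρ0] at this
          exact this.le
        · have : ℓ - 1 = 0 := by omega
          rw [this, hρ0]
      have hzpos : 0 < ζ ℓ q := lt_of_le_of_lt hρprev hzgt
      -- closeness
      have hclose : ρ ℓ - ζ ℓ q < ε' := by
        by_contra hcon
        push_neg at hcon
        have hle : ζ ℓ q ≤ ρ ℓ - ε' := by linarith
        have hreal : σ^2*(ζ ℓ q)^2/2 + A*(ζ ℓ q)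
            + (ζ ℓ q) * ∑ k ∈ Finset.Icc 1 N, aa k / (ρ k - ζ ℓ q)
            - (ζ ℓ q) * ∑ k ∈ Finset.Icc 1 Nh, ah k / (ρh k + ζ ℓ q) = q := by
          have h := hζeq
          rw [psi_ofReal] at h
          exact_mod_cast h
        have hM := hbound (ζ ℓ q) hzpos hzgt hle
        rw [hreal] at hM
        have hMR : M ≤ R := le_trans (le_max_right _ _) (le_max_left _ _)
        linarith
      -- apply uniqueness
      have hqnorm : (0:ℝ) < ‖(q:ℂ)‖ := by
        rw [Complex.norm_real, Real.norm_eq_abs, abs_of_pos hq0]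
        exact hq0
      have hqR : R < ‖(q:ℂ)‖ := by
        rw [Complex.norm_real, Real.norm_eq_abs, abs_of_pos hq0]
        exact hq'
      have hqc0 : (q:ℂ) ≠ 0 := by
        exact_mod_cast ne_of_gt hq0
      have hu : ‖(q:ℂ)⁻¹‖ < r := by
        rw [norm_inv]
        have h1 : 1/r < ‖(q:ℂ)‖ :=
          lt_of_le_of_lt (le_trans (le_max_left _ _) (le_max_left _ _)) hqR
        have h2 := (one_div_lt hr hqnorm).1 h1
        rwa [one_div] at h2
      have hnorm : ‖((ζ ℓ q : ℝ):ℂ) - ((ρ ℓ : ℝ):ℂ)‖ < ε := by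
        rw [← Complex.ofReal_sub, Complex.norm_real, Real.norm_eq_abs]
        have h1 : |ζ ℓ q - ρ ℓ| = ρ ℓ - ζ ℓ q := by
          rw [abs_of_neg (by linarith)]
          ring
        rw [h1]
        linarith [min_le_left ε (ρ ℓ)]
      have hzneq : ((ζ ℓ q : ℝ):ℂ) ≠ ((ρ ℓ : ℝ):ℂ) := by
        exact_mod_cast ne_of_lt hzlt
      have hpsiz : psi σ A N Nh aa ρ ah ρh ((ζ ℓ q : ℝ):ℂ) = 1 / ((q:ℂ)⁻¹) := by
        rw [one_div, inv_inv]
        exact hζeq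
      have huq := huniq ((q:ℂ)⁻¹) hu (inv_ne_zero hqc0) ((ζ ℓ q : ℝ):ℂ) hnorm hzneq hpsiz
      have := huq.symm
      simpa only [zpow_neg, zpow_natCast, ← inv_pow] using this
  ·
    intro ℓ hℓ
    obtain ⟨hℓ1, hℓN⟩ := Finset.mem_Icc.1 hℓ
    have hρhℓpos : 0 < ρh ℓ := by
      have := hmonoh 0 ℓ (by omega) hℓN
      rwa [hρh0] at this
    have hahℓ : 0 < ah ℓ := hposh ℓ hℓ
    set g : ℂ → ℂ := fun z =>
      (σ : ℂ) ^ 2 * z ^ 2 / 2 + (A : ℂ) * z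
        + z * ∑ k ∈ Finset.Icc 1 N, (aa k : ℂ) / ((ρ k : ℂ) - z)
        - z * ∑ k ∈ (Finset.Icc 1 Nh).erase ℓ, (ah k : ℂ) / ((ρh k : ℂ) + z) with hgdef
    have hpsig : ∀ z, psi σ A N Nh aa ρ ah ρh z
        = g z + z * ((ah ℓ : ℂ) / (((-(ρh ℓ) : ℝ) : ℂ) - z)) := by
      intro z
      rw [hgdef]
      unfold psi
      rw [← Finset.add_sum_erase _ (fun k => (ah k : ℂ) / ((ρh k : ℂ) + z)) hℓ]
      push_cast
      have hden : (-(ρh ℓ : ℂ)) - z = -((ρh ℓ : ℂ) + z) := by ring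
      rw [hden, div_neg]
      ring
    have hg : AnalyticAt ℂ g (((-(ρh ℓ) : ℝ)) : ℂ) := by
      rw [hgdef]
      have h1 : AnalyticAt ℂ (fun z : ℂ => (σ : ℂ) ^ 2 * z ^ 2 / 2) (((-(ρh ℓ) : ℝ)) : ℂ) :=
        (analyticAt_const.mul (analyticAt_id.pow 2)).div analyticAt_const (by norm_num)
      have h2 : AnalyticAt ℂ (fun z : ℂ => (A : ℂ) * z) (((-(ρh ℓ) : ℝ)) : ℂ) :=
        analyticAt_const.mul analyticAt_id
      have h3 : AnalyticAt ℂ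
          (fun z : ℂ => ∑ k ∈ Finset.Icc 1 N, (aa k : ℂ) / ((ρ k : ℂ) - z))
          (((-(ρh ℓ) : ℝ)) : ℂ) := by
        apply Finset.analyticAt_fun_sum
        intro k hk
        obtain ⟨hk1, hkN⟩ := Finset.mem_Icc.1 hk
        have hρk : 0 < ρ k := by
          have := hmono 0 k (by omega) hkN
          rwa [hρ0] at this
        have hne' : (ρ k : ℂ) - (((-(ρh ℓ) : ℝ)) : ℂ) ≠ 0 := by
          have h : ((ρ k + ρh ℓ : ℝ) : ℂ) ≠ 0 := by
            rw [Complex.ofReal_ne_zero]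
            positivity
          have heq : (ρ k : ℂ) - (((-(ρh ℓ) : ℝ)) : ℂ) = ((ρ k + ρh ℓ : ℝ) : ℂ) := by
            push_cast
            ring
          rw [heq]
          exact h
        exact analyticAt_const.div (analyticAt_const.sub analyticAt_id) hne'
      have h4 : AnalyticAt ℂ
          (fun z : ℂ => ∑ k ∈ (Finset.Icc 1 Nh).erase ℓ, (ah k : ℂ) / ((ρh k : ℂ) + z))
          (((-(ρh ℓ) : ℝ)) : ℂ) := by
        apply Finset.analyticAt_fun_sum
        intro k hk
        obtain ⟨hkne, hkmem⟩ := Finset.mem_erase.1 hk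
        obtain ⟨hk1, hkN⟩ := Finset.mem_Icc.1 hkmem
        have hne : ρh k ≠ ρh ℓ := by
          rcases lt_or_gt_of_ne hkne with h | h
          · exact ne_of_lt (hmonoh k ℓ h hℓN)
          · exact (ne_of_lt (hmonoh ℓ k h hkN)).symm
        have hne' : (ρh k : ℂ) + (((-(ρh ℓ) : ℝ)) : ℂ) ≠ 0 := by
          have h : ((ρh k - ρh ℓ : ℝ) : ℂ) ≠ 0 := by
            rw [Complex.ofReal_ne_zero]
            exact sub_ne_zero.2 hne
          have heq : (ρh k : ℂ) + (((-(ρh ℓ) : ℝ)) : ℂ) = ((ρh k - ρh ℓ : ℝ) : ℂ) := by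
            push_cast
            ring
          rw [heq]
          exact h
        exact analyticAt_const.div (analyticAt_const.add analyticAt_id) hne'
      exact ((h1.add h2).add (analyticAt_id.mul h3)).sub (analyticAt_id.mul h4)
    have hgc : ∀ z, g (conj' z) = conj' (g z) := by
      intro z
      rw [hgdef]
      simp only [map_add, map_sub, map_mul, map_div₀, map_pow, map_sum, map_ofNat,
        Complex.conj_ofReal]
    have hx0ne : -(ρh ℓ) ≠ (0:ℝ) := neg_ne_zero.2 (ne_of_gt hρhℓpos)
    obtain ⟨r, hr, ε, hε, b, hb0, hb1, hsummable, hpsival, huniq⟩ :=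
      key (psi σ A N Nh aa ρ ah ρh) (-(ρh ℓ)) (ah ℓ) hx0ne (ne_of_gt hahℓ)
        g hg hgc hpsig
    set ε' : ℝ := min ε (ρh ℓ) with hε'def
    have hε'pos : 0 < ε' := lt_min hε hρhℓpos
    have hε'le : ε' ≤ ε := min_le_left _ _
    set M : ℝ := σ^2*(ρh ℓ)^2/2 + |A| * (ρh ℓ)
        + (ρh ℓ/ε') * ∑ k ∈ Finset.Icc 1 Nh, ah k with hMdef
    set R : ℝ := max (max (1/r) M) 1 with hRdef
    have hRpos : (0:ℝ) < R := lt_of_lt_of_le one_pos (le_max_right _ _)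
    have hbound : ∀ x : ℝ, x < 0 → -(ρh ℓ) + ε' ≤ x → x < -(ρh (ℓ-1)) →
        σ^2*x^2/2 + A*x + x * ∑ k ∈ Finset.Icc 1 N, aa k / (ρ k - x)
          - x * ∑ k ∈ Finset.Icc 1 Nh, ah k / (ρh k + x) ≤ M := by
      intro x hx0 hxge hxlt
      have hxabs : -(ρh ℓ) < x := by linarith
      have t1 : σ^2*x^2/2 ≤ σ^2*(ρh ℓ)^2/2 := by
        have hx2 : x^2 ≤ (ρh ℓ)^2 := by nlinarith
        have := mul_le_mul_of_nonneg_left hx2 (sq_nonneg σ)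
        linarith
      have t2 : A*x ≤ |A| * (ρh ℓ) := by
        have habs : |x| ≤ ρh ℓ := abs_le.2 ⟨by linarith, by linarith⟩
        calc A*x ≤ |A*x| := le_abs_self _
          _ = |A| * |x| := abs_mul A x
          _ ≤ |A| * (ρh ℓ) := mul_le_mul_of_nonneg_left habs (abs_nonneg A)
      have t3 : x * ∑ k ∈ Finset.Icc 1 N, aa k / (ρ k - x) ≤ 0 := by
        apply mul_nonpos_of_nonpos_of_nonneg hx0.le
        apply Finset.sum_nonneg
        intro k hk
        obtain ⟨hk1, hkN⟩ := Finset.mem_Icc.1 hk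
        have hρk : 0 < ρ k := by
          have := hmono 0 k (by omega) hkN
          rwa [hρ0] at this
        exact div_nonneg (hpos k hk).le (by linarith)
      have t4 : -(x * ∑ k ∈ Finset.Icc 1 Nh, ah k / (ρh k + x))
          ≤ (ρh ℓ/ε') * ∑ k ∈ Finset.Icc 1 Nh, ah k := by
        rw [Finset.mul_sum, ← Finset.sum_neg_distrib, Finset.mul_sum]
        apply Finset.sum_le_sum
        intro k hk
        obtain ⟨hk1, hkN⟩ := Finset.mem_Icc.1 hk
        rcases lt_or_ge k ℓ with hkl | hkl
        · have hρk : ρh k ≤ ρh (ℓ-1) := by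
            rcases lt_or_eq_of_le (by omega : k ≤ ℓ - 1) with h | h
            · exact (hmonoh k (ℓ-1) h (by omega)).le
            · rw [h]
          have hden : ρh k + x < 0 := by linarith
          have hterm : ah k / (ρh k + x) < 0 := div_neg_of_pos_of_neg (hposh k hk) hden
          have h1 : 0 < x * (ah k / (ρh k + x)) := mul_pos_of_neg_of_neg hx0 hterm
          have h2 : 0 ≤ ρh ℓ/ε' * ah k :=
            mul_nonneg (div_nonneg hρhℓpos.le hε'pos.le) (hposh k hk).le
          linarith
        · have hρk : ρh ℓ ≤ ρh k := by
            rcases lt_or_eq_of_le hkl with h | h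
            · exact (hmonoh ℓ k h hkN).le
            · rw [← h]
          have hden : ε' ≤ ρh k + x := by linarith
          have hterm : ah k / (ρh k + x) ≤ ah k / ε' :=
            div_le_div_of_nonneg_left (hposh k hk).le hε'pos hden
          have h0 : 0 ≤ ah k / (ρh k + x) := div_nonneg (hposh k hk).le (by linarith)
          calc -(x * (ah k / (ρh k + x))) = (-x) * (ah k / (ρh k + x)) := by ring
            _ ≤ ρh ℓ * (ah k / ε') := mul_le_mul (by linarith) hterm h0 hρhℓpos.le
            _ = ρh ℓ/ε' * ah k := by ring
      linarith
    refine ⟨R, hRpos, b, hb0, ?_, ?_⟩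
    · intro q hq'
      have hqnorm : (0:ℝ) < ‖q‖ := lt_trans hRpos hq'
      have hq0 : q ≠ 0 := by
        intro h
        rw [h, norm_zero] at hqnorm
        exact lt_irrefl _ hqnorm
      have hu : ‖q⁻¹‖ < r := by
        rw [norm_inv]
        have h1 : 1/r < ‖q‖ :=
          lt_of_le_of_lt (le_trans (le_max_left _ _) (le_max_left _ _)) hq'
        have h2 := (one_div_lt hr hqnorm).1 h1
        rwa [one_div] at h2
      constructor
      · have := hsummable q⁻¹ hu
        simpa only [zpow_neg, zpow_natCast, ← inv_pow] using this
      · have := hpsival q⁻¹ hu (inv_ne_zero hq0)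
        rw [one_div, inv_inv] at this
        simpa only [zpow_neg, zpow_natCast, ← inv_pow] using this
    · intro q hq'
      have hq1 : (1:ℝ) < q := lt_of_le_of_lt (le_max_right _ _) hq'
      have hq0 : (0:ℝ) < q := by linarith
      obtain ⟨hζmem, hζeq⟩ := hζh ℓ hℓ q hq0
      obtain ⟨hzgt, hzlt⟩ := hζmem
      have hρprev : 0 ≤ ρh (ℓ - 1) := by
        rcases Nat.lt_or_ge 0 (ℓ - 1) with h | h
        · have := hmonoh 0 (ℓ-1) h (by omega)
          rw [hρh0] at this
          exact this.le
        · have : ℓ - 1 = 0 := by omega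
          rw [this, hρh0]
      have hzneg : -(ζh ℓ q) < 0 := by linarith
      have hclose : -(ζh ℓ q) - (-(ρh ℓ)) < ε' := by
        by_contra hcon
        push_neg at hcon
        have hge : -(ρh ℓ) + ε' ≤ -(ζh ℓ q) := by linarith
        have hreal : σ^2*(-(ζh ℓ q))^2/2 + A*(-(ζh ℓ q))
            + (-(ζh ℓ q)) * ∑ k ∈ Finset.Icc 1 N, aa k / (ρ k - -(ζh ℓ q))
            - (-(ζh ℓ q)) * ∑ k ∈ Finset.Icc 1 Nh, ah k / (ρh k + -(ζh ℓ q)) = q := by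
          have h := hζeq
          rw [← Complex.ofReal_neg, psi_ofReal] at h
          exact_mod_cast h
        have hM := hbound (-(ζh ℓ q)) hzneg hge hzlt
        rw [hreal] at hM
        have hMR : M ≤ R := le_trans (le_max_right _ _) (le_max_left _ _)
        linarith
      have hqnorm : (0:ℝ) < ‖(q:ℂ)‖ := by
        rw [Complex.norm_real, Real.norm_eq_abs, abs_of_pos hq0]
        exact hq0
      have hqR : R < ‖(q:ℂ)‖ := by
        rw [Complex.norm_real, Real.norm_eq_abs, abs_of_pos hq0]
        exact hq'
      have hqc0 : (q:ℂ) ≠ 0 := by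
        exact_mod_cast ne_of_gt hq0
      have hu : ‖(q:ℂ)⁻¹‖ < r := by
        rw [norm_inv]
        have h1 : 1/r < ‖(q:ℂ)‖ :=
          lt_of_le_of_lt (le_trans (le_max_left _ _) (le_max_left _ _)) hqR
        have h2 := (one_div_lt hr hqnorm).1 h1
        rwa [one_div] at h2
      have hnorm : ‖((-(ζh ℓ q) : ℝ):ℂ) - ((-(ρh ℓ) : ℝ):ℂ)‖ < ε := by
        rw [← Complex.ofReal_sub, Complex.norm_real, Real.norm_eq_abs]
        have h1 : |(-(ζh ℓ q)) - (-(ρh ℓ))| = -(ζh ℓ q) - (-(ρh ℓ)) := by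
          rw [abs_of_pos (by linarith)]
        rw [h1]
        linarith [min_le_left ε (ρh ℓ)]
      have hzneq : ((-(ζh ℓ q) : ℝ):ℂ) ≠ ((-(ρh ℓ) : ℝ):ℂ) := by
        exact_mod_cast ne_of_gt hzgt
      have hpsiz : psi σ A N Nh aa ρ ah ρh ((-(ζh ℓ q) : ℝ):ℂ) = 1 / ((q:ℂ)⁻¹) := by
        rw [one_div, inv_inv]
        exact_mod_cast hζeq
      have huq := huniq ((q:ℂ)⁻¹) hu (inv_ne_zero hqc0) ((-(ζh ℓ q) : ℝ):ℂ) hnorm hzneq hpsiz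
      have h := huq.symm
      simpa only [zpow_neg, zpow_natCast, ← inv_pow, Complex.ofReal_neg] using h
end
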